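/- arXiv:2504.03348 — 5 statements merged into one kernel-verified Lean document; each statement's English description precedes it below -/
import Mathlib

section
/- If f : [0,1] → ℝ is twice continuously differentiable, then for every ν ≥ 1 and every x ∈ [0,1], |B_ν(f)(x) − f(x)| ≤ (1/(2ν)) x(1−x) ‖f''‖_{[0,1]}, where ‖·‖_{[0,1]} denotes the supremum norm on [0,1]. -/
/-- Bernstein basis polynomial `B_{k,ν}(x) = C(ν,k) x^k (1-x)^(ν-k)`. -/
noncomputable def bern (ν k : ℕ) (x : ℝ) : ℝ :=
  (ν.choose k : ℝ) * x ^ k * (1 - x) ^ (ν - k)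

/-- Bernstein polynomial of degree `ν` of `f`. -/
noncomputable def bernApprox (f : ℝ → ℝ) (ν : ℕ) (x : ℝ) : ℝ :=
  ∑ k ∈ Finset.range (ν + 1), f ((k : ℝ) / ν) * bern ν k x

theorem bernstein_error_bound (f : ℝ → ℝ)
    (hf : ContDiffOn ℝ 2 f (Set.Icc (0 : ℝ) 1)) (M : ℝ)
    (hM : ∀ t ∈ Set.Icc (0 : ℝ) 1,
      |iteratedDerivWithin 2 f (Set.Icc (0 : ℝ) 1) t| ≤ M)
    (ν : ℕ) (hν : 1 ≤ ν) (x : ℝ) (hx : x ∈ Set.Icc (0 : ℝ) 1) :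
    |bernApprox f ν x - f x| ≤ 1 / (2 * ν) * (x * (1 - x)) * M := by
  set s : Set ℝ := Set.Icc (0 : ℝ) 1 with hs_def
  have hus : UniqueDiffOn ℝ s := uniqueDiffOn_Icc one_pos
  set d : ℝ → ℝ := derivWithin f s with hd_def
  have hν0 : (0 : ℝ) < (ν : ℝ) := by exact_mod_cast hν
  have hνne : (ν : ℝ) ≠ 0 := ne_of_gt hν0
  have hM0 : 0 ≤ M := le_trans (abs_nonneg _) (hM 0 ⟨le_refl 0, zero_le_one⟩)
  have hx0 : (0 : ℝ) ≤ x := hx.1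
  have hx1 : x ≤ 1 := hx.2
  -- `d` is differentiable on `s` with `derivWithin d s = iteratedDerivWithin 2 f s`
  have hd1 : ContDiffOn ℝ 1 d s := hf.derivWithin hus (by norm_num)
  have hdd : ∀ t ∈ s, derivWithin d s t = iteratedDerivWithin 2 f s t := by
    intro t ht
    rw [show (2 : ℕ) = 1 + 1 from rfl, iteratedDerivWithin_succ',
      iteratedDerivWithin_one]
  -- `d` is `M`-Lipschitz on `s`
  have lip : ∀ a ∈ s, ∀ b ∈ s, |d b - d a| ≤ M * |b - a| := by
    intro a ha b hb
    have := Convex.norm_image_sub_le_of_norm_derivWithin_le (f := d) (s := s)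
      (hd1.differentiableOn one_ne_zero)
      (fun t ht => by rw [Real.norm_eq_abs, hdd t ht]; exact hM t ht)
      (convex_Icc 0 1) ha hb
    simpa [Real.norm_eq_abs] using this
  have hfc : ContinuousOn f s := hf.continuousOn
  -- inside the interval, `f` has derivative `d`
  have hfd : ∀ t ∈ Set.Ioo (0 : ℝ) 1, HasDerivAt f (d t) t := by
    intro t ht
    have hmem : s ∈ nhds t := Icc_mem_nhds ht.1 ht.2
    have hda : DifferentiableAt ℝ f t :=
      ((hf.differentiableOn (by norm_num)) t (Set.mem_Icc_of_Ioo ht)).differentiableAt hmem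
    have : d t = deriv f t := derivWithin_of_mem_nhds hmem
    rw [this]
    exact hda.hasDerivAt
  -- key second-order Taylor estimate
  have main : ∀ ε : ℝ, ε = 1 ∨ ε = -1 → ∀ y ∈ s,
      ε * (f y - f x - d x * (y - x)) ≤ M / 2 * (y - x) ^ 2 := by
    intro ε hε y hy
    have hε' : ∀ a : ℝ, ε * a ≤ |a| := by
      intro a; rcases hε with h | h <;> rw [h]
      · simpa using le_abs_self a
      · simpa using neg_le_abs a
    set g : ℝ → ℝ := fun t => ε * (f t - d x * t) - M / 2 * (t - x) ^ 2 with hg_def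
    have hg : ∀ t ∈ Set.Ioo (0 : ℝ) 1, HasDerivAt g (ε * (d t - d x) - M * (t - x)) t := by
      intro t ht
      have h1 : HasDerivAt (fun u : ℝ => f u - d x * u) (d t - d x * 1) t :=
        (hfd t ht).sub ((hasDerivAt_id t).const_mul (d x))
      have h2 : HasDerivAt (fun u : ℝ => M / 2 * (u - x) ^ 2)
          (M / 2 * ((2 : ℕ) * (t - x) ^ 1 * 1)) t :=
        (((hasDerivAt_id t).sub_const x).pow 2).const_mul (M / 2)
      have := (h1.const_mul ε).sub h2
      refine this.congr_deriv ?_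
      ring
    have hgy : g y ≤ g x := by
      rcases le_total x y with hxy | hxy
      · -- antitone on `[x, y]`
        have hsub : Set.Icc x y ⊆ s := Set.Icc_subset_Icc hx0 hy.2
        have hio : Set.Ioo x y ⊆ Set.Ioo (0 : ℝ) 1 := fun t ht =>
          ⟨lt_of_le_of_lt hx0 ht.1, lt_of_lt_of_le ht.2 hy.2⟩
        have hcont : ContinuousOn g (Set.Icc x y) := by
          apply ContinuousOn.sub
          · exact continuousOn_const.mul ((hfc.mono hsub).sub
              (continuousOn_const.mul continuousOn_id))
          · exact (continuous_const.mul ((continuous_id.sub continuous_const).pow 2)).continuousOn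
        have hmono : AntitoneOn g (Set.Icc x y) := by
          apply antitoneOn_of_deriv_nonpos (convex_Icc x y) hcont
          · intro t ht
            rw [interior_Icc] at ht
            exact (hg t (hio ht)).differentiableAt.differentiableWithinAt
          · intro t ht
            rw [interior_Icc] at ht
            rw [(hg t (hio ht)).deriv]
            have h1 : ε * (d t - d x) ≤ |d t - d x| := hε' _
            have h2 : |d t - d x| ≤ M * |t - x| := lip x hx t (hsub (Set.mem_Icc_of_Ioo ht))
            have h3 : |t - x| = t - x := abs_of_nonneg (by linarith [ht.1])
            rw [h3] at h2
            linarith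
        exact hmono ⟨le_refl x, hxy⟩ ⟨hxy, le_refl y⟩ hxy
      · -- monotone on `[y, x]`
        have hsub : Set.Icc y x ⊆ s := Set.Icc_subset_Icc hy.1 hx1
        have hio : Set.Ioo y x ⊆ Set.Ioo (0 : ℝ) 1 := fun t ht =>
          ⟨lt_of_le_of_lt hy.1 ht.1, lt_of_lt_of_le ht.2 hx1⟩
        have hcont : ContinuousOn g (Set.Icc y x) := by
          apply ContinuousOn.sub
          · exact continuousOn_const.mul ((hfc.mono hsub).sub
              (continuousOn_const.mul continuousOn_id))
          · exact (continuous_const.mul ((continuous_id.sub continuous_const).pow 2)).continuousOn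
        have hmono : MonotoneOn g (Set.Icc y x) := by
          apply monotoneOn_of_deriv_nonneg (convex_Icc y x) hcont
          · intro t ht
            rw [interior_Icc] at ht
            exact (hg t (hio ht)).differentiableAt.differentiableWithinAt
          · intro t ht
            rw [interior_Icc] at ht
            rw [(hg t (hio ht)).deriv]
            have h1 : ε * (d x - d t) ≤ |d x - d t| := hε' _
            have h2 : |d x - d t| ≤ M * |x - t| := lip t (hsub (Set.mem_Icc_of_Ioo ht)) x hx
            have h3 : |x - t| = x - t := abs_of_nonneg (by linarith [ht.2])
            rw [h3] at h2
            nlinarith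
        exact hmono ⟨le_refl y, hxy⟩ ⟨hxy, le_refl x⟩ hxy
    have h2 : ε * (f y - d x * y) - M / 2 * (y - x) ^ 2 ≤
        ε * (f x - d x * x) - M / 2 * (x - x) ^ 2 := hgy
    nlinarith [h2]
  have key : ∀ y ∈ s, |f y - f x - d x * (y - x)| ≤ M / 2 * (y - x) ^ 2 := by
    intro y hy
    rw [abs_le]
    constructor
    · have := main (-1) (Or.inr rfl) y hy; linarith
    · have := main 1 (Or.inl rfl) y hy; linarith
  -- Bernstein sum identities
  have hS0 : (∑ k ∈ Finset.range (ν + 1), bern ν k x) = 1 := by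
    have h := congrArg (Polynomial.eval x) (bernsteinPolynomial.sum ℝ ν)
    rw [Polynomial.eval_finset_sum] at h
    simp only [bernsteinPolynomial, Polynomial.eval_mul, Polynomial.eval_pow, Polynomial.eval_sub,
      Polynomial.eval_one, Polynomial.eval_X, Polynomial.eval_natCast] at h
    simpa [bern] using h
  have hS1 : (∑ k ∈ Finset.range (ν + 1), (k : ℝ) * bern ν k x) = ν * x := by
    have h := congrArg (Polynomial.eval x) (bernsteinPolynomial.sum_smul ℝ ν)
    rw [Polynomial.eval_finset_sum] at h
    simp only [bernsteinPolynomial, Polynomial.eval_mul, Polynomial.eval_pow, Polynomial.eval_sub,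
      Polynomial.eval_one, Polynomial.eval_X, Polynomial.eval_natCast, Polynomial.eval_smul,
      nsmul_eq_mul, smul_eq_mul] at h
    simpa [bern] using h
  have hS2 : (∑ k ∈ Finset.range (ν + 1), ((ν : ℝ) * x - k) ^ 2 * bern ν k x) = ν * x * (1 - x) := by
    have h := congrArg (Polynomial.eval x) (bernsteinPolynomial.variance ℝ ν)
    rw [Polynomial.eval_finset_sum] at h
    simp only [bernsteinPolynomial, Polynomial.eval_mul, Polynomial.eval_pow, Polynomial.eval_sub,
      Polynomial.eval_one, Polynomial.eval_X, Polynomial.eval_natCast, Polynomial.eval_smul,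
      nsmul_eq_mul, smul_eq_mul] at h
    simpa [bern] using h
  have hbnn : ∀ k, 0 ≤ bern ν k x := fun k =>
    mul_nonneg (mul_nonneg (Nat.cast_nonneg _) (pow_nonneg hx0 _))
      (pow_nonneg (by linarith) _)
  have hmem : ∀ k ∈ Finset.range (ν + 1), ((k : ℝ) / ν) ∈ s := by
    intro k hk
    rw [Finset.mem_range, Nat.lt_succ_iff] at hk
    constructor
    · positivity
    · rw [div_le_one hν0]; exact_mod_cast hk
  -- decomposition of the error
  have expand : bernApprox f ν x - f x =
      ∑ k ∈ Finset.range (ν + 1),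
        (f ((k : ℝ) / ν) - f x - d x * ((k : ℝ) / ν - x)) * bern ν k x := by
    have e1 : (∑ k ∈ Finset.range (ν + 1), f x * bern ν k x) = f x := by
      rw [← Finset.mul_sum, hS0, mul_one]
    have e2 : (∑ k ∈ Finset.range (ν + 1), d x * ((k : ℝ) / ν - x) * bern ν k x) = 0 := by
      have : ∀ k ∈ Finset.range (ν + 1), d x * ((k : ℝ) / ν - x) * bern ν k x =
          d x / ν * ((k : ℝ) * bern ν k x) - d x * x * bern ν k x := by
        intro k _; field_simp
      rw [Finset.sum_congr rfl this, Finset.sum_sub_distrib, ← Finset.mul_sum, ← Finset.mul_sum,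
        hS1, hS0]
      field_simp
      ring
    have e3 : (∑ k ∈ Finset.range (ν + 1),
        (f ((k : ℝ) / ν) - f x - d x * ((k : ℝ) / ν - x)) * bern ν k x) =
        (∑ k ∈ Finset.range (ν + 1), f ((k : ℝ) / ν) * bern ν k x) -
        (∑ k ∈ Finset.range (ν + 1), f x * bern ν k x) -
        (∑ k ∈ Finset.range (ν + 1), d x * ((k : ℝ) / ν - x) * bern ν k x) := by
      rw [← Finset.sum_sub_distrib, ← Finset.sum_sub_distrib]
      apply Finset.sum_congr rfl
      intro k _; ring
    rw [e3, e1, e2, bernApprox]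
    ring
  -- variance identity in the convenient form
  have hS2' : (∑ k ∈ Finset.range (ν + 1), ((k : ℝ) / ν - x) ^ 2 * bern ν k x)
      = x * (1 - x) / ν := by
    have : ∀ k ∈ Finset.range (ν + 1), ((k : ℝ) / ν - x) ^ 2 * bern ν k x =
        (1 / (ν : ℝ) ^ 2) * (((ν : ℝ) * x - k) ^ 2 * bern ν k x) := by
      intro k _
      have hk : ((k : ℝ) / ν - x) ^ 2 = (1 / (ν : ℝ) ^ 2) * ((ν : ℝ) * x - k) ^ 2 := by
        field_simp
        ring
      rw [hk, mul_assoc]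
    rw [Finset.sum_congr rfl this, ← Finset.mul_sum, hS2]
    field_simp
  -- final estimate
  rw [expand]
  calc |∑ k ∈ Finset.range (ν + 1),
      (f ((k : ℝ) / ν) - f x - d x * ((k : ℝ) / ν - x)) * bern ν k x|
      ≤ ∑ k ∈ Finset.range (ν + 1),
        |(f ((k : ℝ) / ν) - f x - d x * ((k : ℝ) / ν - x)) * bern ν k x| :=
      Finset.abs_sum_le_sum_abs _ _
    _ ≤ ∑ k ∈ Finset.range (ν + 1), M / 2 * (((k : ℝ) / ν - x) ^ 2 * bern ν k x) := by
      apply Finset.sum_le_sum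
      intro k hk
      rw [abs_mul, abs_of_nonneg (hbnn k)]
      have := key _ (hmem k hk)
      calc |f ((k : ℝ) / ν) - f x - d x * ((k : ℝ) / ν - x)| * bern ν k x
          ≤ (M / 2 * ((k : ℝ) / ν - x) ^ 2) * bern ν k x :=
            mul_le_mul_of_nonneg_right this (hbnn k)
        _ = M / 2 * (((k : ℝ) / ν - x) ^ 2 * bern ν k x) := by ring
    _ = M / 2 * (x * (1 - x) / ν) := by rw [← Finset.mul_sum, hS2']
    _ = 1 / (2 * ν) * (x * (1 - x)) * M := by field_simp
end

section
/- Let f₁, f₂ : [0,1] → ℝ be continuous functions that coincide on an open set Ω ⊂ (0,1), let ℓ ≥ 0 be an integer and let K ⊂ Ω be compact. Then there exists a constant M > 0, depending only on K and ℓ, such that for all ν ≥ 1 and all x ∈ K, |B_ν(f₁)^{(ℓ)}(x) − B_ν(f₂)^{(ℓ)}(x)| ≤ (M/ν²)·‖f₁ − f₂‖_{[0,1]}. -/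
open Finset Real



noncomputable def bernZ (m : ℕ) (j : ℤ) (x : ℝ) : ℝ :=
  if 0 ≤ j then bern m j.toNat x else 0

lemma bern_nonneg {m k : ℕ} {x : ℝ} (hx : x ∈ Set.Icc (0:ℝ) 1) : 0 ≤ bern m k x := by
  obtain ⟨h0, h1⟩ := hx
  have h1' : (0:ℝ) ≤ 1 - x := by linarith
  unfold bern
  positivity

lemma bernZ_nonneg {m : ℕ} {j : ℤ} {x : ℝ} (hx : x ∈ Set.Icc (0:ℝ) 1) : 0 ≤ bernZ m j x := by
  unfold bernZ; split
  · exact bern_nonneg hx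
  · exact le_refl _

lemma bern_sum (m : ℕ) (x : ℝ) : ∑ k ∈ range (m+1), bern m k x = 1 := by
  have h := add_pow x (1-x) m
  simp only [add_sub_cancel, one_pow] at h
  have : ∑ k ∈ range (m+1), bern m k x
      = ∑ k ∈ range (m+1), x ^ k * (1 - x) ^ (m - k) * (m.choose k : ℝ) := by
    apply Finset.sum_congr rfl; intro k hk; unfold bern; ring
  rw [this, ← h]

lemma bern_le_one {m k : ℕ} {x : ℝ} (hx : x ∈ Set.Icc (0:ℝ) 1) : bern m k x ≤ 1 := by
  by_cases h : k ∈ range (m+1)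
  · calc bern m k x ≤ ∑ j ∈ range (m+1), bern m j x :=
        Finset.single_le_sum (f := fun j => bern m j x) (fun j _ => bern_nonneg hx) h
    _ = 1 := bern_sum m x
  · have : bern m k x = 0 := by
      unfold bern; rw [Nat.choose_eq_zero_of_lt (by simpa using h)]; simp
    simp [this]

lemma bernZ_le_one {m : ℕ} {j : ℤ} {x : ℝ} (hx : x ∈ Set.Icc (0:ℝ) 1) : bernZ m j x ≤ 1 := by
  unfold bernZ; split
  · exact bern_le_one hx
  · norm_num

lemma bern_hasDerivAt (m k : ℕ) (x : ℝ) :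
    HasDerivAt (bern m k)
      ((m.choose k : ℝ) * ((k:ℝ) * x^(k-1) * (1-x)^(m-k) - ((m-k : ℕ):ℝ) * x^k * (1-x)^(m-k-1))) x := by
  have h1 : HasDerivAt (fun x : ℝ => x ^ k) ((k:ℝ) * x^(k-1)) x := hasDerivAt_pow k x
  have h2 : HasDerivAt (fun x : ℝ => (1-x) ^ (m-k)) (-(((m-k:ℕ):ℝ) * (1-x)^(m-k-1))) x := by
    have := (hasDerivAt_pow (m-k) (1-x)).comp x ((hasDerivAt_const x (1:ℝ)).sub (hasDerivAt_id x))
    simpa [Function.comp_def] using this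
  have := ((h1.mul h2).const_mul ((m.choose k : ℝ)))
  have e : bern m k = fun y => (m.choose k : ℝ) * (((fun x : ℝ => x ^ k) * fun x : ℝ => (1 - x) ^ (m - k)) y) := by
    funext y; unfold bern; simp only [Pi.mul_apply]; ring
  rw [e]; refine this.congr_deriv ?_; ring

lemma bernZ_natCast (m k : ℕ) : bernZ m (k:ℤ) = bern m k := by
  funext y; unfold bernZ; rw [if_pos (by omega)]; simp

lemma bernZ_hasDerivAt (m : ℕ) (hm : 1 ≤ m) (j : ℤ) (x : ℝ) :
    HasDerivAt (bernZ m j) ((m:ℝ) * (bernZ (m-1) (j-1) x - bernZ (m-1) j x)) x := by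
  rcases lt_or_ge j 0 with hj | hj
  · have e1 : bernZ m j = fun _ => 0 := by funext y; unfold bernZ; rw [if_neg (not_le.mpr hj)]
    have e2 : bernZ (m-1) (j-1) x = 0 := by unfold bernZ; rw [if_neg (by omega)]
    have e3 : bernZ (m-1) j x = 0 := by unfold bernZ; rw [if_neg (not_le.mpr hj)]
    rw [e1, e2, e3]; simpa using hasDerivAt_const x (0:ℝ)
  · obtain ⟨k, rfl⟩ : ∃ k:ℕ, j = (k:ℤ) := ⟨j.toNat, by omega⟩
    rw [bernZ_natCast]
    rcases Nat.eq_zero_or_pos k with hk0 | hk1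
    · -- k = 0
      subst hk0
      have e2 : bernZ (m-1) (((0:ℕ):ℤ)-1) x = 0 := by unfold bernZ; rw [if_neg (by omega)]
      rw [e2, bernZ_natCast]
      have := bern_hasDerivAt m 0 x
      convert this using 1
      unfold bern
      simp only [Nat.choose_zero_right, Nat.cast_one, Nat.cast_zero, Nat.sub_zero, pow_zero]
      ring
    · -- k ≥ 1
      have e2 : bernZ (m-1) ((k:ℤ)-1) x = bern (m-1) (k-1) x := by
        rw [show (k:ℤ)-1 = ((k-1:ℕ):ℤ) by omega, bernZ_natCast]
      rw [e2, bernZ_natCast]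
      have := bern_hasDerivAt m k x
      convert this using 1
      unfold bern
      obtain ⟨m', rfl⟩ : ∃ m', m = m'+1 := ⟨m-1, by omega⟩
      obtain ⟨k', rfl⟩ : ∃ k', k = k'+1 := ⟨k-1, by omega⟩
      have id1 : ((m'+1:ℕ):ℝ) * ((m'.choose k') : ℝ) = (((m'+1).choose (k'+1)) : ℝ) * ((k'+1:ℕ):ℝ) := by
        exact_mod_cast congrArg (Nat.cast : ℕ → ℝ) (Nat.add_one_mul_choose_eq m' k')
      have id2 : ((m'+1:ℕ):ℝ) * (m'.choose (k'+1) : ℝ) = (((m'+1).choose (k'+1)) : ℝ) * ((m'+1-(k'+1):ℕ):ℝ) := by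
        have h2 : m'.choose (k'+1) * (m'+1) = (m'+1).choose (k'+1) * (m'+1-(k'+1)) :=
          Nat.choose_mul_succ_eq m' (k'+1)
        calc ((m'+1:ℕ):ℝ) * (m'.choose (k'+1) : ℝ) = ((m'.choose (k'+1) * (m'+1) : ℕ) : ℝ) := by push_cast; ring
          _ = (((m'+1).choose (k'+1) * (m'+1-(k'+1)) : ℕ) : ℝ) := by rw [h2]
          _ = _ := by push_cast; ring
      simp only [Nat.add_sub_cancel]
      have ee1 : m' + 1 - 1 - (k'+1-1) = m'+1 - (k'+1) := by omega
      have ee2 : m' + 1 - 1 - (k'+1) = m'+1 - (k'+1) - 1 := by omega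
      simp only [Nat.add_sub_cancel] at ee1 ee2 id1 id2
      rw [ee1, ee2, mul_sub]
      rw [show ((m'+1:ℕ):ℝ) * ((m'.choose k' :ℝ) * x ^ k' * (1-x)^(m'+1-(k'+1))) = (((m'+1:ℕ):ℝ) * (m'.choose k' : ℝ)) * x ^ k' * (1-x)^(m'+1-(k'+1)) by push_cast; ring,
        show ((m'+1:ℕ):ℝ) * ((m'.choose (k'+1) :ℝ) * x ^ (k'+1) * (1-x)^(m'+1-(k'+1)-1)) = (((m'+1:ℕ):ℝ) * (m'.choose (k'+1) : ℝ)) * x ^ (k'+1) * (1-x)^(m'+1-(k'+1)-1) by push_cast; ring,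
        id1, id2]
      push_cast
      ring

lemma alt_sum_step (ℓ : ℕ) (B : ℕ → ℝ) :
    ∑ i ∈ range (ℓ+1), (-1:ℝ)^i * (ℓ.choose i : ℝ) * (B i - B (i+1))
      = ∑ i ∈ range (ℓ+2), (-1:ℝ)^i * ((ℓ+1).choose i : ℝ) * B i := by
  have hR : ∑ i ∈ range (ℓ+2), (-1:ℝ)^i * ((ℓ+1).choose i : ℝ) * B i
      = (∑ i ∈ range (ℓ+1), (-1:ℝ)^(i+1) * (((ℓ+1).choose (i+1)) : ℝ) * B (i+1)) + B 0 := by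
    rw [Finset.sum_range_succ' (fun i => (-1:ℝ)^i * ((ℓ+1).choose i : ℝ) * B i) (ℓ+1)]
    simp
  have hsplit : ∀ i, ((-1:ℝ))^(i+1) * (((ℓ+1).choose (i+1)) : ℝ) * B (i+1)
      = -((-1:ℝ)^i * (ℓ.choose i : ℝ) * B (i+1)) - (-1:ℝ)^i * (ℓ.choose (i+1) : ℝ) * B (i+1) := by
    intro i
    rw [Nat.choose_succ_succ]
    push_cast
    ring
  have hL1 : ∑ i ∈ range (ℓ+1), (-1:ℝ)^i * (ℓ.choose i : ℝ) * B i
      = (∑ i ∈ range ℓ, (-1:ℝ)^(i+1) * ((ℓ.choose (i+1)) : ℝ) * B (i+1)) + B 0 := by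
    rw [Finset.sum_range_succ' (fun i => (-1:ℝ)^i * (ℓ.choose i : ℝ) * B i) ℓ]
    simp
  have hL2 : ∑ i ∈ range (ℓ+1), (-1:ℝ)^i * (ℓ.choose (i+1) : ℝ) * B (i+1)
      = ∑ i ∈ range ℓ, (-1:ℝ)^i * (ℓ.choose (i+1) : ℝ) * B (i+1) := by
    rw [Finset.sum_range_succ]
    simp [Nat.choose_succ_self]
  calc ∑ i ∈ range (ℓ+1), (-1:ℝ)^i * (ℓ.choose i : ℝ) * (B i - B (i+1))
      = (∑ i ∈ range (ℓ+1), (-1:ℝ)^i * (ℓ.choose i : ℝ) * B i)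
        - ∑ i ∈ range (ℓ+1), (-1:ℝ)^i * (ℓ.choose i : ℝ) * B (i+1) := by
        rw [← Finset.sum_sub_distrib]; apply Finset.sum_congr rfl; intros; ring
    _ = ∑ i ∈ range (ℓ+2), (-1:ℝ)^i * ((ℓ+1).choose i : ℝ) * B i := by
        rw [hR, hL1]
        rw [Finset.sum_congr rfl (fun i _ => hsplit i), Finset.sum_sub_distrib]
        rw [hL2, Finset.sum_neg_distrib]
        have : ∀ i, (-1:ℝ)^(i+1) * ((ℓ.choose (i+1)) : ℝ) * B (i+1)
            = -((-1:ℝ)^i * (ℓ.choose (i+1) : ℝ) * B (i+1)) := by intro i; ring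
        rw [Finset.sum_congr rfl (fun i _ => this i), Finset.sum_neg_distrib]
        ring

lemma iteratedDeriv_bernZ (ℓ : ℕ) : ∀ (m : ℕ), ℓ ≤ m → ∀ (j : ℤ),
    iteratedDeriv ℓ (bernZ m j) = fun x =>
      (m.descFactorial ℓ : ℝ) *
        ∑ i ∈ range (ℓ+1), (-1:ℝ)^i * (ℓ.choose i : ℝ) * bernZ (m-ℓ) (j - ℓ + i) x := by
  induction ℓ with
  | zero =>
    intro m _ j
    funext x
    simp [iteratedDeriv_zero]
  | succ ℓ IH =>
    intro m hm j
    funext x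
    have hm1 : 1 ≤ m - ℓ := by omega
    rw [iteratedDeriv_succ, IH m (by omega) j]
    have hder : HasDerivAt (fun x => (m.descFactorial ℓ : ℝ) *
        ∑ i ∈ range (ℓ+1), (-1:ℝ)^i * (ℓ.choose i : ℝ) * bernZ (m-ℓ) (j - ℓ + i) x)
        ((m.descFactorial ℓ : ℝ) *
          ∑ i ∈ range (ℓ+1), (-1:ℝ)^i * (ℓ.choose i : ℝ) *
            (((m-ℓ:ℕ):ℝ) * (bernZ (m-ℓ-1) (j - ℓ + i - 1) x - bernZ (m-ℓ-1) (j - ℓ + i) x))) x := by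
      apply HasDerivAt.const_mul
      apply HasDerivAt.fun_sum
      intro i _
      exact (bernZ_hasDerivAt (m-ℓ) hm1 (j - ℓ + i) x).const_mul _
    rw [hder.deriv]
    set B : ℕ → ℝ := fun i => bernZ (m-(ℓ+1)) (j - (ℓ+1) + i) x with hB
    have e1 : ∀ i : ℕ, bernZ (m-ℓ-1) (j - ℓ + i - 1) x = B i := by
      intro i
      have : m - ℓ - 1 = m - (ℓ+1) := by omega
      rw [this, hB]
      congr 1
      push_cast
      ring
    have e2 : ∀ i : ℕ, bernZ (m-ℓ-1) (j - ℓ + i) x = B (i+1) := by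
      intro i
      have : m - ℓ - 1 = m - (ℓ+1) := by omega
      rw [this, hB]
      congr 1
      push_cast
      ring
    calc (m.descFactorial ℓ : ℝ) *
          ∑ i ∈ range (ℓ+1), (-1:ℝ)^i * (ℓ.choose i : ℝ) *
            (((m-ℓ:ℕ):ℝ) * (bernZ (m-ℓ-1) (j - ℓ + i - 1) x - bernZ (m-ℓ-1) (j - ℓ + i) x))
        = ((m-ℓ:ℕ):ℝ) * (m.descFactorial ℓ : ℝ) *
          ∑ i ∈ range (ℓ+1), (-1:ℝ)^i * (ℓ.choose i : ℝ) * (B i - B (i+1)) := by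
          rw [Finset.mul_sum, Finset.mul_sum]
          apply Finset.sum_congr rfl
          intro i _
          rw [e1 i, e2 i]
          ring
      _ = (m.descFactorial (ℓ+1) : ℝ) * ∑ i ∈ range (ℓ+2), (-1:ℝ)^i * ((ℓ+1).choose i : ℝ) * B i := by
          rw [alt_sum_step ℓ B, Nat.descFactorial_succ]
          push_cast
          ring

/-- exp(λ) ≤ 1 + λ + λ² for 0 ≤ λ ≤ 1 -/
lemma exp_quad_bound {l : ℝ} (h0 : 0 ≤ l) (h1 : l ≤ 1) : exp l ≤ 1 + l + l^2 := by
  have := Real.exp_bound (x := l) (by rw [abs_of_nonneg h0]; exact h1) (n := 2) (by norm_num)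
  have hs : ∑ i ∈ range 2, l ^ i / (Nat.factorial i : ℝ) = 1 + l := by
    simp [Finset.sum_range_succ]
  rw [hs, abs_of_nonneg h0] at this
  have h2 : |exp l - (1 + l)| ≤ l ^ 2 * (3 / 4) := by
    convert this using 2
    norm_num [Nat.factorial]
  have := abs_le.mp h2
  nlinarith [sq_nonneg l]

/-- Chernoff: generic exponential-moment bound. -/
lemma bern_exp_sum (m : ℕ) (x : ℝ) (t : ℝ) :
    ∑ j ∈ range (m+1), exp (t * j) * bern m j x = (x * exp t + (1 - x)) ^ m := by
  have h := add_pow (x * exp t) (1-x) m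
  rw [h]
  apply Finset.sum_congr rfl
  intro j hj
  unfold bern
  rw [mul_pow, ← Real.exp_nat_mul]
  rw [mul_comm (j:ℝ) t]
  ring

lemma tail_upper (m : ℕ) {x η : ℝ} (hx : x ∈ Set.Icc (0:ℝ) 1) (hη : 0 < η) (hη1 : η ≤ 1) :
    ∑ j ∈ (range (m+1)).filter (fun j : ℕ => (x + η) * m ≤ (j:ℝ)), bern m j x
      ≤ exp (-(η^2/4) * m) := by
  obtain ⟨hx0, hx1⟩ := hx
  set l := η/2 with hl
  have hl0 : 0 < l := by positivity
  have hl1 : l ≤ 1 := by rw [hl]; linarith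
  have step1 : ∑ j ∈ (range (m+1)).filter (fun j : ℕ => (x + η) * m ≤ (j:ℝ)), bern m j x
      ≤ ∑ j ∈ range (m+1), exp (l * ((j:ℝ) - (x+η)*m)) * bern m j x := by
    apply le_trans (b := ∑ j ∈ (range (m+1)).filter (fun j : ℕ => (x + η) * m ≤ (j:ℝ)),
        exp (l * ((j:ℝ) - (x+η)*m)) * bern m j x)
    · apply Finset.sum_le_sum
      intro j hj
      rw [Finset.mem_filter] at hj
      nth_rewrite 1 [show bern m j x = 1 * bern m j x by ring]
      apply mul_le_mul_of_nonneg_right _ (bern_nonneg ⟨hx0, hx1⟩)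
      rw [← Real.exp_zero]
      apply Real.exp_le_exp.mpr
      have := hj.2
      nlinarith
    · apply Finset.sum_le_sum_of_subset_of_nonneg (Finset.filter_subset _ _)
      intro j _ _
      have := bern_nonneg (m := m) (k := j) (x := x) ⟨hx0, hx1⟩
      positivity
  have step2 : ∑ j ∈ range (m+1), exp (l * ((j:ℝ) - (x+η)*m)) * bern m j x
      = exp (-(l*(x+η)*m)) * (x * exp l + (1 - x)) ^ m := by
    rw [← bern_exp_sum m x l, Finset.mul_sum]
    apply Finset.sum_congr rfl
    intro j _
    rw [← mul_assoc, ← Real.exp_add]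
    ring_nf
  rw [step2] at step1
  apply le_trans step1
  have hbase : x * exp l + (1 - x) ≤ exp (x * (exp l - 1)) := by
    have := Real.add_one_le_exp (x * (exp l - 1))
    linarith
  have hbase0 : 0 ≤ x * exp l + (1 - x) := by
    have := Real.exp_pos l
    nlinarith
  have hpow : (x * exp l + (1 - x)) ^ m ≤ exp (m * (x * (exp l - 1))) := by
    calc (x * exp l + (1 - x)) ^ m ≤ (exp (x * (exp l - 1))) ^ m :=
        pow_le_pow_left₀ hbase0 hbase m
      _ = exp (m * (x * (exp l - 1))) := by rw [← Real.exp_nat_mul]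
  calc exp (-(l*(x+η)*m)) * (x * exp l + (1 - x)) ^ m
      ≤ exp (-(l*(x+η)*m)) * exp (m * (x * (exp l - 1))) :=
        mul_le_mul_of_nonneg_left hpow (le_of_lt (Real.exp_pos _))
    _ = exp (-(l*(x+η)*m) + m * (x * (exp l - 1))) := by rw [← Real.exp_add]
    _ ≤ exp (-(η^2/4) * m) := by
        apply Real.exp_le_exp.mpr
        have hq : exp l - 1 - l ≤ l^2 := by have := exp_quad_bound hl0.le hl1; linarith
        have hq0 : 0 ≤ exp l - 1 - l := by have := Real.add_one_le_exp l; linarith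
        have hm0 : (0:ℝ) ≤ m := Nat.cast_nonneg m
        have key : x * (exp l - 1) - l*(x+η) ≤ -(η^2/4) := by
          have h1 : x * (exp l - 1 - l) ≤ l^2 := by nlinarith
          have h2 : l^2 - l*η = -(η^2/4) := by rw [hl]; ring
          nlinarith
        nlinarith

lemma exp_quad_bound_neg {l : ℝ} (h0 : 0 ≤ l) (h1 : l ≤ 1) : exp (-l) ≤ 1 - l + l^2 := by
  have := Real.exp_bound (x := -l) (by rw [abs_neg, abs_of_nonneg h0]; exact h1) (n := 2) (by norm_num)
  have hs : ∑ i ∈ range 2, (-l) ^ i / (Nat.factorial i : ℝ) = 1 - l := by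
    simp [Finset.sum_range_succ]
    ring
  rw [hs, abs_neg, abs_of_nonneg h0] at this
  have h2 : |exp (-l) - (1 - l)| ≤ l ^ 2 * (3 / 4) := by
    convert this using 2
    norm_num [Nat.factorial]
  have := abs_le.mp h2
  nlinarith [sq_nonneg l]

lemma tail_lower (m : ℕ) {x η : ℝ} (hx : x ∈ Set.Icc (0:ℝ) 1) (hη : 0 < η) (hη1 : η ≤ 1) :
    ∑ j ∈ (range (m+1)).filter (fun j : ℕ => (j:ℝ) ≤ (x - η) * m), bern m j x
      ≤ exp (-(η^2/4) * m) := by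
  obtain ⟨hx0, hx1⟩ := hx
  set l := η/2 with hl
  have hl0 : 0 < l := by positivity
  have hl1 : l ≤ 1 := by rw [hl]; linarith
  have step1 : ∑ j ∈ (range (m+1)).filter (fun j : ℕ => (j:ℝ) ≤ (x - η) * m), bern m j x
      ≤ ∑ j ∈ range (m+1), exp (l * ((x-η)*m - (j:ℝ))) * bern m j x := by
    apply le_trans (b := ∑ j ∈ (range (m+1)).filter (fun j : ℕ => (j:ℝ) ≤ (x - η) * m),
        exp (l * ((x-η)*m - (j:ℝ))) * bern m j x)
    · apply Finset.sum_le_sum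
      intro j hj
      rw [Finset.mem_filter] at hj
      nth_rewrite 1 [show bern m j x = 1 * bern m j x by ring]
      apply mul_le_mul_of_nonneg_right _ (bern_nonneg ⟨hx0, hx1⟩)
      rw [← Real.exp_zero]
      apply Real.exp_le_exp.mpr
      have := hj.2
      nlinarith
    · apply Finset.sum_le_sum_of_subset_of_nonneg (Finset.filter_subset _ _)
      intro j _ _
      have := bern_nonneg (m := m) (k := j) (x := x) ⟨hx0, hx1⟩
      positivity
  have step2 : ∑ j ∈ range (m+1), exp (l * ((x-η)*m - (j:ℝ))) * bern m j x
      = exp (l*(x-η)*m) * (x * exp (-l) + (1 - x)) ^ m := by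
    rw [← bern_exp_sum m x (-l), Finset.mul_sum]
    apply Finset.sum_congr rfl
    intro j _
    rw [← mul_assoc, ← Real.exp_add]
    ring_nf
  rw [step2] at step1
  apply le_trans step1
  have hbase : x * exp (-l) + (1 - x) ≤ exp (x * (exp (-l) - 1)) := by
    have := Real.add_one_le_exp (x * (exp (-l) - 1))
    linarith
  have hbase0 : 0 ≤ x * exp (-l) + (1 - x) := by
    have := Real.exp_pos (-l)
    nlinarith
  have hpow : (x * exp (-l) + (1 - x)) ^ m ≤ exp (m * (x * (exp (-l) - 1))) := by
    calc (x * exp (-l) + (1 - x)) ^ m ≤ (exp (x * (exp (-l) - 1))) ^ m :=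
        pow_le_pow_left₀ hbase0 hbase m
      _ = exp (m * (x * (exp (-l) - 1))) := by rw [← Real.exp_nat_mul]
  calc exp (l*(x-η)*m) * (x * exp (-l) + (1 - x)) ^ m
      ≤ exp (l*(x-η)*m) * exp (m * (x * (exp (-l) - 1))) :=
        mul_le_mul_of_nonneg_left hpow (le_of_lt (Real.exp_pos _))
    _ = exp (l*(x-η)*m + m * (x * (exp (-l) - 1))) := by rw [← Real.exp_add]
    _ ≤ exp (-(η^2/4) * m) := by
        apply Real.exp_le_exp.mpr
        have hq : exp (-l) - 1 + l ≤ l^2 := by have := exp_quad_bound_neg hl0.le hl1; linarith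
        have hq0 : 0 ≤ exp (-l) - 1 + l := by have := Real.add_one_le_exp (-l); linarith
        have hm0 : (0:ℝ) ≤ m := Nat.cast_nonneg m
        have key : x * (exp (-l) - 1) + l*(x-η) ≤ -(η^2/4) := by
          have h1 : x * (exp (-l) - 1 + l) ≤ l^2 := by nlinarith
          have h2 : l^2 - l*η = -(η^2/4) := by rw [hl]; ring
          nlinarith
        nlinarith

lemma tail_both (m : ℕ) (hm : 1 ≤ m) {x η : ℝ} (hx : x ∈ Set.Icc (0:ℝ) 1)
    (hη : 0 < η) (hη1 : η ≤ 1) :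
    ∑ j ∈ (range (m+1)).filter (fun j : ℕ => η * m ≤ |(j:ℝ) - x * m|), bern m j x
      ≤ 2 * exp (-(η^2/4) * m) := by
  have hsub : (range (m+1)).filter (fun j : ℕ => η * m ≤ |(j:ℝ) - x * m|)
      ⊆ (range (m+1)).filter (fun j : ℕ => (x + η) * m ≤ (j:ℝ))
        ∪ (range (m+1)).filter (fun j : ℕ => (j:ℝ) ≤ (x - η) * m) := by
    intro j hj
    rw [Finset.mem_filter] at hj
    obtain ⟨hj1, hj2⟩ := hj
    rw [Finset.mem_union, Finset.mem_filter, Finset.mem_filter]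
    rcases le_abs.mp hj2 with h | h
    · left; exact ⟨hj1, by nlinarith⟩
    · right; exact ⟨hj1, by nlinarith⟩
  calc ∑ j ∈ (range (m+1)).filter (fun j : ℕ => η * m ≤ |(j:ℝ) - x * m|), bern m j x
      ≤ ∑ j ∈ ((range (m+1)).filter (fun j : ℕ => (x + η) * m ≤ (j:ℝ))
        ∪ (range (m+1)).filter (fun j : ℕ => (j:ℝ) ≤ (x - η) * m)), bern m j x := by
        apply Finset.sum_le_sum_of_subset_of_nonneg hsub
        intro j _ _; exact bern_nonneg hx
    _ ≤ (∑ j ∈ (range (m+1)).filter (fun j : ℕ => (x + η) * m ≤ (j:ℝ)), bern m j x)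
        + ∑ j ∈ (range (m+1)).filter (fun j : ℕ => (j:ℝ) ≤ (x - η) * m), bern m j x := by
        apply le_of_eq
        apply Finset.sum_union
        rw [Finset.disjoint_filter]
        intro j _ h1 h2
        have hm0 : (1:ℝ) ≤ m := by exact_mod_cast hm
        nlinarith
    _ ≤ exp (-(η^2/4) * m) + exp (-(η^2/4) * m) :=
        add_le_add (tail_upper m hx hη hη1) (tail_lower m hx hη hη1)
    _ = 2 * exp (-(η^2/4) * m) := by ring


lemma bernZ_zero_const (j : ℤ) : bernZ 0 j = fun _ : ℝ => if j = 0 then 1 else 0 := by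
  funext x
  unfold bernZ bern
  rcases lt_trichotomy j 0 with h | h | h
  · rw [if_neg (by omega), if_neg (by omega)]
  · subst h; norm_num
  · rw [if_pos (by omega), if_neg (by omega)]
    have : 0 < j.toNat := by omega
    rw [Nat.choose_eq_zero_of_lt (by omega)]
    simp

lemma bernZ_contDiff (m : ℕ) (j : ℤ) : ContDiff ℝ ⊤ (bernZ m j) := by
  unfold bernZ
  split
  · unfold bern
    exact (contDiff_const.mul (contDiff_id.pow _)).mul ((contDiff_const.sub contDiff_id).pow _)
  · exact contDiff_const

lemma bern_contDiff (m k : ℕ) : ContDiff ℝ ⊤ (bern m k) := by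
  rw [← bernZ_natCast]; exact bernZ_contDiff m k

lemma iteratedDeriv_bernZ_of_lt {ℓ : ℕ} (m : ℕ) (j : ℤ) (h : m < ℓ) :
    iteratedDeriv ℓ (bernZ m j) = fun _ => 0 := by
  induction ℓ with
  | zero => omega
  | succ ℓ IH =>
    rcases Nat.lt_or_ge m ℓ with h' | h'
    · rw [iteratedDeriv_succ, IH h']
      funext x
      exact deriv_const x 0
    · have hm : ℓ = m := by omega
      subst hm
      rw [iteratedDeriv_succ, iteratedDeriv_bernZ ℓ ℓ le_rfl j]
      have hconst : (fun x => (ℓ.descFactorial ℓ : ℝ) *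
          ∑ i ∈ range (ℓ+1), (-1:ℝ)^i * (ℓ.choose i : ℝ) * bernZ (ℓ-ℓ) (j - ℓ + i) x)
          = fun _ : ℝ => (ℓ.descFactorial ℓ : ℝ) *
          ∑ i ∈ range (ℓ+1), (-1:ℝ)^i * (ℓ.choose i : ℝ) * (if j - ℓ + i = 0 then (1:ℝ) else 0) := by
        funext x
        congr 1
        apply Finset.sum_congr rfl
        intro i _
        rw [Nat.sub_self, bernZ_zero_const]
      rw [hconst]
      funext x
      exact deriv_const x _

/-- The uniform bound on the iterated derivative of a Bernstein basis element. -/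
lemma abs_iteratedDeriv_bernZ_le {ℓ m : ℕ} (hl : ℓ ≤ m) (j : ℤ) {x : ℝ}
    (hx : x ∈ Set.Icc (0:ℝ) 1) :
    |iteratedDeriv ℓ (bernZ m j) x|
      ≤ (m:ℝ)^ℓ * ∑ i ∈ range (ℓ+1), (ℓ.choose i : ℝ) * bernZ (m-ℓ) (j - ℓ + i) x := by
  rw [iteratedDeriv_bernZ ℓ m hl j]
  rw [abs_mul]
  apply mul_le_mul
  · rw [abs_of_nonneg (by positivity)]
    exact_mod_cast Nat.descFactorial_le_pow m ℓ
  · apply le_trans (Finset.abs_sum_le_sum_abs _ _)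
    apply Finset.sum_le_sum
    intro i _
    rw [abs_mul, abs_mul, abs_pow, abs_neg, abs_one, one_pow, one_mul,
      Nat.abs_cast, abs_of_nonneg (bernZ_nonneg hx)]
  · exact abs_nonneg _
  · positivity

/-- crude bound -/
lemma abs_iteratedDeriv_bernZ_crude {ℓ m : ℕ} (j : ℤ) {x : ℝ} (hx : x ∈ Set.Icc (0:ℝ) 1) :
    |iteratedDeriv ℓ (bernZ m j) x| ≤ (m:ℝ)^ℓ * 2^ℓ := by
  rcases Nat.lt_or_ge m ℓ with h | h
  · rw [iteratedDeriv_bernZ_of_lt m j h]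
    have : (0:ℝ) ≤ (m:ℝ)^ℓ * 2^ℓ := by positivity
    simpa using this
  · apply le_trans (abs_iteratedDeriv_bernZ_le h j hx)
    apply mul_le_mul_of_nonneg_left _ (by positivity)
    calc ∑ i ∈ range (ℓ+1), (ℓ.choose i : ℝ) * bernZ (m-ℓ) (j - ℓ + i) x
        ≤ ∑ i ∈ range (ℓ+1), (ℓ.choose i : ℝ) * 1 := by
          apply Finset.sum_le_sum
          intro i _
          exact mul_le_mul_of_nonneg_left (bernZ_le_one hx) (by positivity)
      _ = 2^ℓ := by
          simp only [mul_one]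
          rw [← Nat.cast_sum]
          rw [Nat.sum_range_choose]
          push_cast
          ring

/-- iterated derivative of a finite linear combination of smooth functions -/
lemma iteratedDeriv_sum_const_mul {α : Type*} (s : Finset α) (c : α → ℝ) (F : α → ℝ → ℝ)
    (hF : ∀ a, ContDiff ℝ ⊤ (F a)) (n : ℕ) :
    iteratedDeriv n (fun x => ∑ a ∈ s, c a * F a x)
      = fun x => ∑ a ∈ s, c a * iteratedDeriv n (F a) x := by
  induction n with
  | zero => simp [iteratedDeriv_zero]
  | succ n IH =>
    rw [iteratedDeriv_succ, IH]
    funext x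
    have : HasDerivAt (fun x => ∑ a ∈ s, c a * iteratedDeriv n (F a) x)
        (∑ a ∈ s, c a * deriv (iteratedDeriv n (F a)) x) x := by
      apply HasDerivAt.fun_sum
      intro a _
      apply HasDerivAt.const_mul
      exact (((hF a).differentiable_iteratedDeriv n (by simp)) x).hasDerivAt
    rw [this.deriv]
    apply Finset.sum_congr rfl
    intro a _
    rw [iteratedDeriv_succ]


lemma bern_eq_zero_of_gt {m j : ℕ} (h : m < j) (x : ℝ) : bern m j x = 0 := by
  unfold bern; rw [Nat.choose_eq_zero_of_lt h]; simp

lemma sum_bernZ_shift_le (m d : ℕ) (S T : Finset ℕ) {x : ℝ} (hx : x ∈ Set.Icc (0:ℝ) 1)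
    (hmem : ∀ k ∈ S, d ≤ k → k - d ≤ m → k - d ∈ T) :
    ∑ k ∈ S, bernZ m ((k:ℤ) - d) x ≤ ∑ j ∈ T, bern m j x := by
  have h1 : ∑ k ∈ S.filter (fun k => d ≤ k), bernZ m ((k:ℤ)-d) x
      = ∑ k ∈ S, bernZ m ((k:ℤ)-d) x := by
    apply Finset.sum_filter_of_ne
    intro k _ hne
    by_contra hdk
    apply hne
    unfold bernZ
    rw [if_neg (by omega)]
  rw [← h1]
  have h2 : ∑ k ∈ S.filter (fun k => d ≤ k), bernZ m ((k:ℤ)-d) x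
      = ∑ k ∈ S.filter (fun k => d ≤ k), bern m (k-d) x := by
    apply Finset.sum_congr rfl
    intro k hk
    rw [Finset.mem_filter] at hk
    rw [show (k:ℤ) - d = ((k - d : ℕ) : ℤ) by omega, bernZ_natCast]
  rw [h2]
  have h3 : ∑ k ∈ (S.filter (fun k => d ≤ k)).filter (fun k => k - d ≤ m), bern m (k-d) x
      = ∑ k ∈ S.filter (fun k => d ≤ k), bern m (k-d) x := by
    apply Finset.sum_filter_of_ne
    intro k _ hne
    by_contra hkm
    exact hne (bern_eq_zero_of_gt (by omega) x)
  rw [← h3]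
  set S2 := (S.filter (fun k => d ≤ k)).filter (fun k => k - d ≤ m) with hS2
  have h4 : ∑ k ∈ S2, bern m (k-d) x = ∑ j ∈ S2.image (fun k => k - d), bern m j x := by
    rw [Finset.sum_image]
    intro k1 hk1 k2 hk2 he
    simp only [Finset.mem_coe, hS2, Finset.mem_filter] at hk1 hk2 he
    omega
  rw [h4]
  apply Finset.sum_le_sum_of_subset_of_nonneg
  · intro j hj
    rw [Finset.mem_image] at hj
    obtain ⟨k, hk, rfl⟩ := hj
    rw [hS2, Finset.mem_filter, Finset.mem_filter] at hk
    exact hmem k hk.1.1 hk.1.2 hk.2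
  · intro j _ _
    exact bern_nonneg hx


/-- Key index-separation arithmetic, isolated with minimal context. -/
lemma far_index {ν ℓ m k d : ℕ} {x η : ℝ} (hν : 1 ≤ ν)
    (hm1 : 1 ≤ m) (hmν : (m:ℝ) = (ν:ℝ) - ℓ) (hd : d ≤ ℓ) (hdk : d ≤ k) (hkν : k ≤ ν)
    (hη : 0 < η) (h2ℓη : (2*ℓ:ℝ) ≤ η * m)
    (hfar : 2*η < |(k:ℝ)/ν - x|) :
    η * m ≤ |((k-d:ℕ):ℝ) - x*m| := by
  have hνpos : (0:ℝ) < (ν:ℝ) := by exact_mod_cast hν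
  have hmpos : (0:ℝ) < (m:ℝ) := by exact_mod_cast hm1
  set r : ℝ := (k:ℝ)/ν with hr
  have hkr : (k:ℝ) = (ν:ℝ) * r := by rw [hr]; field_simp
  have hr0 : 0 ≤ r := by rw [hr]; positivity
  have hr1 : r ≤ 1 := by rw [hr, div_le_one hνpos]; exact_mod_cast hkν
  have hjcast : ((k - d : ℕ):ℝ) = (k:ℝ) - (d:ℝ) := by
    push_cast [Nat.cast_sub hdk]; ring
  have hdℓ : (d:ℝ) ≤ (ℓ:ℝ) := by exact_mod_cast hd
  have hd0 : (0:ℝ) ≤ (d:ℝ) := Nat.cast_nonneg _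
  have hlr0 : 0 ≤ (ℓ:ℝ)*r := by positivity
  have hlr1 : (ℓ:ℝ)*r ≤ (ℓ:ℝ) := mul_le_of_le_one_right (Nat.cast_nonneg ℓ) hr1
  have hmid : |(m:ℝ)*r - ((k-d:ℕ):ℝ)| ≤ (ℓ:ℝ) := by
    rw [hjcast, hkr, hmν]
    have e : ((ν:ℝ) - ℓ)*r - ((ν:ℝ)*r - d) = (d:ℝ) - (ℓ:ℝ)*r := by ring
    rw [e, abs_le]
    constructor <;> linarith
  have hsep : (m:ℝ) * (2*η) < |(m:ℝ)*r - (m:ℝ)*x| := by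
    have e : |(m:ℝ)*r - (m:ℝ)*x| = (m:ℝ) * |r - x| := by
      rw [← mul_sub, abs_mul, abs_of_nonneg hmpos.le]
    rw [e]
    exact (mul_lt_mul_iff_right₀ hmpos).mpr hfar
  have htri : |(m:ℝ)*r - (m:ℝ)*x| - |(m:ℝ)*r - ((k-d:ℕ):ℝ)| ≤ |((k-d:ℕ):ℝ) - x*(m:ℝ)| := by
    have e : ((k-d:ℕ):ℝ) - x*(m:ℝ) = ((m:ℝ)*r - (m:ℝ)*x) - ((m:ℝ)*r - ((k-d:ℕ):ℝ)) := by ring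
    rw [e]
    exact abs_sub_abs_le_abs_sub _ _
  have hℓηm : (ℓ:ℝ) ≤ η * m := by
    have hℓ0 : (0:ℝ) ≤ (ℓ:ℝ) := Nat.cast_nonneg _
    linarith
  calc η * m = (m:ℝ)*(2*η) - η*m := by ring
    _ ≤ |(m:ℝ)*r - (m:ℝ)*x| - (ℓ:ℝ) := by linarith
    _ ≤ |(m:ℝ)*r - (m:ℝ)*x| - |(m:ℝ)*r - ((k-d:ℕ):ℝ)| := by linarith
    _ ≤ |((k-d:ℕ):ℝ) - x*(m:ℝ)| := htri
    _ = |((k-d:ℕ):ℝ) - x*(m:ℝ)| := rfl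

theorem bernstein_comparison (f₁ f₂ : ℝ → ℝ)
    (hf₁ : ContinuousOn f₁ (Set.Icc (0 : ℝ) 1))
    (hf₂ : ContinuousOn f₂ (Set.Icc (0 : ℝ) 1))
    (Ω : Set ℝ) (hΩopen : IsOpen Ω) (hΩsub : Ω ⊆ Set.Ioo (0 : ℝ) 1)
    (heq : Set.EqOn f₁ f₂ Ω) (ℓ : ℕ)
    (K : Set ℝ) (hK : IsCompact K) (hKΩ : K ⊆ Ω) :
    ∃ M > (0 : ℝ), ∀ ν : ℕ, 1 ≤ ν → ∀ x ∈ K, ∀ N : ℝ,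
      (∀ t ∈ Set.Icc (0 : ℝ) 1, |f₁ t - f₂ t| ≤ N) →
      |iteratedDeriv ℓ (bernApprox f₁ ν) x - iteratedDeriv ℓ (bernApprox f₂ ν) x|
        ≤ M / ν ^ 2 * N := by
  classical
  obtain ⟨δ, hδpos, hδ⟩ := hK.exists_cthickening_subset_open hΩopen hKΩ
  obtain ⟨δ', hδ'⟩ : ∃ v : ℝ, v = min δ 1 := ⟨_, rfl⟩
  have hδ'pos : 0 < δ' := by rw [hδ']; exact lt_min hδpos one_pos
  obtain ⟨η, hη'⟩ : ∃ v : ℝ, v = δ' / 2 := ⟨_, rfl⟩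
  have hη : 0 < η := by rw [hη']; positivity
  have hη1 : η ≤ 1 := by
    have : δ' ≤ 1 := by rw [hδ']; exact min_le_right _ _
    rw [hη']; linarith
  have hδ'2η : δ' = 2*η := by rw [hη']; ring
  obtain ⟨c, hc⟩ : ∃ v : ℝ, v = η^2/4 := ⟨_, rfl⟩
  have hcpos : 0 < c := by rw [hc]; positivity
  obtain ⟨ν₀, hν₀⟩ : ∃ v : ℕ, v = 2*ℓ + 2 + ⌈(2*ℓ:ℝ)/η⌉₊ := ⟨_, rfl⟩
  obtain ⟨C₁, hC₁⟩ : ∃ v : ℝ, v = ((ℓ+2).factorial : ℝ) * (2/c)^(ℓ+2) := ⟨_, rfl⟩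
  have hC₁pos : 0 < C₁ := by
    rw [hC₁]
    have : (0:ℝ) < ((ℓ+2).factorial : ℝ) := by exact_mod_cast (ℓ+2).factorial_pos
    exact mul_pos this (pow_pos (div_pos two_pos hcpos) _)
  obtain ⟨M, hM⟩ : ∃ v : ℝ, v = (ν₀:ℝ)^(ℓ+2) * 2^ℓ * ((ν₀:ℝ)+1) + 2^(ℓ+1) * C₁ + 1 := ⟨_, rfl⟩
  have hν₀1 : 1 ≤ ν₀ := by omega
  have hMpos : 0 < M := by
    rw [hM]
    have h1 : (0:ℝ) ≤ (ν₀:ℝ)^(ℓ+2) * 2^ℓ * ((ν₀:ℝ)+1) := by positivity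
    have h2 : (0:ℝ) < 2^(ℓ+1) * C₁ := mul_pos (pow_pos (by norm_num) _) hC₁pos
    linarith
  refine ⟨M, hMpos, ?_⟩
  intro ν hν x hxK N hN
  have hνpos : (0:ℝ) < (ν:ℝ) := by exact_mod_cast hν
  have hxΩ : x ∈ Ω := hKΩ hxK
  have hxI : x ∈ Set.Icc (0:ℝ) 1 := by
    have := hΩsub hxΩ
    exact ⟨this.1.le, this.2.le⟩
  have hN0 : 0 ≤ N := le_trans (abs_nonneg _) (hN 0 ⟨le_rfl, zero_le_one⟩)
  have hBA : ∀ f : ℝ → ℝ, iteratedDeriv ℓ (bernApprox f ν)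
      = fun x => ∑ k ∈ range (ν+1), f ((k:ℝ)/ν) * iteratedDeriv ℓ (bern ν k) x := by
    intro f
    have : bernApprox f ν = fun x => ∑ k ∈ range (ν+1), f ((k:ℝ)/ν) * bern ν k x := rfl
    rw [this, iteratedDeriv_sum_const_mul _ _ _ (fun k => bern_contDiff ν k)]
  obtain ⟨g, hg⟩ : ∃ v : ℕ → ℝ, v = fun k : ℕ => f₁ ((k:ℝ)/ν) - f₂ ((k:ℝ)/ν) := ⟨_, rfl⟩
  have hdiff : iteratedDeriv ℓ (bernApprox f₁ ν) x - iteratedDeriv ℓ (bernApprox f₂ ν) x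
      = ∑ k ∈ range (ν+1), g k * iteratedDeriv ℓ (bern ν k) x := by
    rw [hBA f₁, hBA f₂]
    rw [← Finset.sum_sub_distrib]
    apply Finset.sum_congr rfl
    intro k _
    rw [hg]; ring
  obtain ⟨S, hS⟩ : ∃ v : Finset ℕ, v = (range (ν+1)).filter (fun k : ℕ => ¬ ((k:ℝ)/ν ∈ Ω)) := ⟨_, rfl⟩
  have hSsum : ∑ k ∈ S, g k * iteratedDeriv ℓ (bern ν k) x
      = ∑ k ∈ range (ν+1), g k * iteratedDeriv ℓ (bern ν k) x := by
    rw [hS]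
    apply Finset.sum_filter_of_ne
    intro k _ hne
    by_contra hkΩ
    apply hne
    have : g k = 0 := by simp only [hg]; rw [heq hkΩ]; ring
    rw [this]; ring
  have hgN : ∀ k ∈ range (ν+1), |g k| ≤ N := by
    intro k hk
    rw [Finset.mem_range] at hk
    simp only [hg]
    apply hN
    constructor
    · positivity
    · rw [div_le_one hνpos]
      exact_mod_cast Nat.lt_succ_iff.mp hk
  have hfar : ∀ k ∈ S, 2*η < |(k:ℝ)/ν - x| := by
    intro k hk
    rw [hS, Finset.mem_filter] at hk
    by_contra hle
    push_neg at hle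
    apply hk.2
    apply hδ
    apply Metric.mem_cthickening_of_dist_le ((k:ℝ)/ν) x δ K hxK
    rw [Real.dist_eq]
    calc |(k:ℝ)/ν - x| ≤ 2*η := hle
      _ = δ' := hδ'2η.symm
      _ ≤ δ := by rw [hδ']; exact min_le_left _ _
  rw [div_mul_eq_mul_div, le_div_iff₀ (by positivity : (0:ℝ) < (ν:ℝ)^2), hdiff, ← hSsum]
  have habs : |∑ k ∈ S, g k * iteratedDeriv ℓ (bern ν k) x|
      ≤ N * ∑ k ∈ S, |iteratedDeriv ℓ (bern ν k) x| := by
    apply le_trans (Finset.abs_sum_le_sum_abs _ _)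
    rw [Finset.mul_sum]
    apply Finset.sum_le_sum
    intro k hk
    rw [abs_mul]
    apply mul_le_mul_of_nonneg_right (hgN k (Finset.mem_filter.mp (hS ▸ hk)).1) (abs_nonneg _)
  rcases lt_or_ge ν ν₀ with hsmall | hlarge
  · -- small ν: crude bound
    have hcrude : ∑ k ∈ S, |iteratedDeriv ℓ (bern ν k) x| ≤ ((ν:ℝ)+1) * ((ν:ℝ)^ℓ * 2^ℓ) := by
      calc ∑ k ∈ S, |iteratedDeriv ℓ (bern ν k) x|
          ≤ ∑ _k ∈ S, ((ν:ℝ)^ℓ * 2^ℓ) := by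
            apply Finset.sum_le_sum
            intro k _
            rw [← bernZ_natCast]
            exact abs_iteratedDeriv_bernZ_crude (k:ℤ) hxI
        _ = S.card * ((ν:ℝ)^ℓ * 2^ℓ) := by rw [Finset.sum_const, nsmul_eq_mul]
        _ ≤ ((ν:ℝ)+1) * ((ν:ℝ)^ℓ * 2^ℓ) := by
            apply mul_le_mul_of_nonneg_right _ (by positivity)
            have : S.card ≤ ν + 1 := by
              rw [hS]
              exact le_trans (Finset.card_filter_le _ _) (by simp)
            exact_mod_cast this
    have hνν₀ : (ν:ℝ) ≤ (ν₀:ℝ) := by exact_mod_cast hsmall.le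
    calc |∑ k ∈ S, g k * iteratedDeriv ℓ (bern ν k) x| * (ν:ℝ)^2
        ≤ (N * (((ν:ℝ)+1) * ((ν:ℝ)^ℓ * 2^ℓ))) * (ν:ℝ)^2 := by
          apply mul_le_mul_of_nonneg_right _ (by positivity)
          exact le_trans habs (mul_le_mul_of_nonneg_left hcrude hN0)
      _ ≤ ((ν₀:ℝ)^(ℓ+2) * 2^ℓ * ((ν₀:ℝ)+1)) * N := by
          have h1 : (ν:ℝ)^ℓ ≤ (ν₀:ℝ)^ℓ := pow_le_pow_left₀ hνpos.le hνν₀ ℓ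
          have h2 : (ν:ℝ)^2 ≤ (ν₀:ℝ)^2 := pow_le_pow_left₀ hνpos.le hνν₀ 2
          have h3 : (ν:ℝ)+1 ≤ (ν₀:ℝ)+1 := by linarith
          have hstep : ((ν:ℝ)+1) * ((ν:ℝ)^ℓ * 2^ℓ) * (ν:ℝ)^2
              ≤ ((ν₀:ℝ)+1) * ((ν₀:ℝ)^ℓ * 2^ℓ) * (ν₀:ℝ)^2 := by
            apply mul_le_mul _ h2 (by positivity) (by positivity)
            apply mul_le_mul h3 (mul_le_mul_of_nonneg_right h1 (by positivity)) (by positivity)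
              (by positivity)
          calc (N * (((ν:ℝ)+1) * ((ν:ℝ)^ℓ * 2^ℓ))) * (ν:ℝ)^2
              = N * (((ν:ℝ)+1) * ((ν:ℝ)^ℓ * 2^ℓ) * (ν:ℝ)^2) := by ring
            _ ≤ N * (((ν₀:ℝ)+1) * ((ν₀:ℝ)^ℓ * 2^ℓ) * (ν₀:ℝ)^2) :=
                mul_le_mul_of_nonneg_left hstep hN0
            _ = ((ν₀:ℝ)^(ℓ+2) * 2^ℓ * ((ν₀:ℝ)+1)) * N := by rw [pow_add]; ring
      _ ≤ M * N := by
          apply mul_le_mul_of_nonneg_right _ hN0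
          rw [hM]
          have h2 : (0:ℝ) < 2^(ℓ+1) * C₁ := mul_pos (pow_pos (by norm_num) _) hC₁pos
          linarith
  · -- large ν
    have hℓν : ℓ ≤ ν := by omega
    have hm1 : 1 ≤ ν - ℓ := by omega
    have hmcast : ((ν - ℓ : ℕ):ℝ) = (ν:ℝ) - ℓ := by
      push_cast [Nat.cast_sub hℓν]; ring
    have hmν2 : (ν:ℝ) ≤ 2*((ν-ℓ:ℕ):ℝ) := by
      rw [hmcast]
      have h2l : (2*ℓ:ℝ) ≤ (ν:ℝ) := by exact_mod_cast (by omega : 2*ℓ ≤ ν)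
      push_cast at h2l ⊢
      linarith
    have h2ℓη : (2*ℓ:ℝ) ≤ η * ((ν-ℓ:ℕ):ℝ) := by
      have hceil : (⌈(2*ℓ:ℝ)/η⌉₊ : ℝ) ≤ ((ν-ℓ:ℕ):ℝ) := by
        exact_mod_cast (by omega : ⌈(2*ℓ:ℝ)/η⌉₊ ≤ ν - ℓ)
      have hle := Nat.le_ceil ((2*ℓ:ℝ)/η)
      have hd : (2*ℓ:ℝ)/η ≤ ((ν-ℓ:ℕ):ℝ) := le_trans hle hceil
      calc (2*ℓ:ℝ) = ((2*ℓ:ℝ)/η) * η := by field_simp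
        _ ≤ ((ν-ℓ:ℕ):ℝ) * η := mul_le_mul_of_nonneg_right hd hη.le
        _ = η * ((ν-ℓ:ℕ):ℝ) := by ring
    obtain ⟨T, hT⟩ : ∃ v : Finset ℕ, v = (range (ν-ℓ+1)).filter
        (fun j : ℕ => η * ((ν-ℓ:ℕ):ℝ) ≤ |(j:ℝ) - x * ((ν-ℓ:ℕ):ℝ)|) := ⟨_, rfl⟩
    have hshift : ∀ i ∈ range (ℓ+1),
        ∑ k ∈ S, bernZ (ν-ℓ) ((k:ℤ) - ℓ + i) x ≤ 2 * exp (-(η^2/4) * ((ν-ℓ:ℕ):ℝ)) := by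
      intro i hi
      rw [Finset.mem_range] at hi
      have hiℓ : i ≤ ℓ := by omega
      have hsum : ∑ k ∈ S, bernZ (ν-ℓ) ((k:ℤ) - ℓ + i) x
          = ∑ k ∈ S, bernZ (ν-ℓ) ((k:ℤ) - (ℓ-i:ℕ)) x := by
        apply Finset.sum_congr rfl
        intro k _
        congr 1
        omega
      rw [hsum]
      apply le_trans (sum_bernZ_shift_le (ν-ℓ) (ℓ-i) S T hxI ?_)
      · rw [hT]
        exact tail_both (ν-ℓ) hm1 hxI hη hη1
      · intro k hkS hdk hjm
        have hkν : k ≤ ν := by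
          have := (Finset.mem_filter.mp (by rw [hS] at hkS; exact hkS)).1
          rw [Finset.mem_range] at this; omega
        rw [hT, Finset.mem_filter, Finset.mem_range]
        refine ⟨by omega, ?_⟩
        exact far_index hν hm1 hmcast (by omega : ℓ - i ≤ ℓ) hdk hkν hη h2ℓη (hfar k hkS)
    have hbound : ∑ k ∈ S, |iteratedDeriv ℓ (bern ν k) x|
        ≤ (ν:ℝ)^ℓ * (2^ℓ * (2 * exp (-(η^2/4) * ((ν-ℓ:ℕ):ℝ)))) := by
      calc ∑ k ∈ S, |iteratedDeriv ℓ (bern ν k) x|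
          ≤ ∑ k ∈ S, (ν:ℝ)^ℓ * ∑ i ∈ range (ℓ+1), (ℓ.choose i : ℝ) * bernZ (ν-ℓ) ((k:ℤ) - ℓ + i) x := by
            apply Finset.sum_le_sum
            intro k _
            rw [← bernZ_natCast]
            exact abs_iteratedDeriv_bernZ_le hℓν (k:ℤ) hxI
        _ = (ν:ℝ)^ℓ * ∑ i ∈ range (ℓ+1), (ℓ.choose i : ℝ) * ∑ k ∈ S, bernZ (ν-ℓ) ((k:ℤ) - ℓ + i) x := by
            rw [← Finset.mul_sum, Finset.sum_comm]
            congr 1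
            apply Finset.sum_congr rfl
            intro i _
            rw [Finset.mul_sum]
        _ ≤ (ν:ℝ)^ℓ * ∑ i ∈ range (ℓ+1), (ℓ.choose i : ℝ) * (2 * exp (-(η^2/4) * ((ν-ℓ:ℕ):ℝ))) := by
            apply mul_le_mul_of_nonneg_left _ (by positivity)
            apply Finset.sum_le_sum
            intro i hi
            exact mul_le_mul_of_nonneg_left (hshift i hi) (by positivity)
        _ = (ν:ℝ)^ℓ * (2^ℓ * (2 * exp (-(η^2/4) * ((ν-ℓ:ℕ):ℝ)))) := by
            rw [← Finset.sum_mul]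
            congr 2
            rw [← Nat.cast_sum, Nat.sum_range_choose]
            push_cast; ring
    have hexp : (ν:ℝ)^(ℓ+2) * exp (-(η^2/4) * ((ν-ℓ:ℕ):ℝ)) ≤ C₁ := by
      have h1 : exp (-(η^2/4) * ((ν-ℓ:ℕ):ℝ)) ≤ exp (-((c/2) * ν)) := by
        apply Real.exp_le_exp.mpr
        rw [hc]
        have hq : (0:ℝ) ≤ η^2/4 := by positivity
        nlinarith [mul_le_mul_of_nonneg_left hmν2 hq]
      have h2 : (ν:ℝ)^(ℓ+2) ≤ C₁ * exp ((c/2) * ν) := by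
        have hp := Real.pow_div_factorial_le_exp (x := (c/2) * ν)
          (mul_nonneg (by linarith [hcpos]) hνpos.le) (ℓ+2)
        rw [div_le_iff₀ (by positivity : (0:ℝ) < ((ℓ+2).factorial : ℝ))] at hp
        have e : (ν:ℝ)^(ℓ+2) = (2/c)^(ℓ+2) * ((c/2) * ν)^(ℓ+2) := by
          rw [← mul_pow]
          have hc0 : c ≠ 0 := hcpos.ne'
          have : (2/c) * ((c/2) * ν) = (ν:ℝ) := by field_simp
          rw [this]
        rw [e, hC₁]
        calc (2/c)^(ℓ+2) * ((c/2) * ν)^(ℓ+2)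
            ≤ (2/c)^(ℓ+2) * (exp ((c/2) * ν) * ((ℓ+2).factorial : ℝ)) := by
              apply mul_le_mul_of_nonneg_left hp (le_of_lt (pow_pos (div_pos two_pos hcpos) _))
          _ = ((ℓ+2).factorial : ℝ) * (2/c)^(ℓ+2) * exp ((c/2) * ν) := by ring
      calc (ν:ℝ)^(ℓ+2) * exp (-(η^2/4) * ((ν-ℓ:ℕ):ℝ))
          ≤ (C₁ * exp ((c/2) * ν)) * exp (-((c/2) * ν)) :=
            mul_le_mul h2 h1 (le_of_lt (Real.exp_pos _)) (mul_nonneg hC₁pos.le (le_of_lt (Real.exp_pos _)))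
        _ = C₁ * exp ((c/2) * ν + (-((c/2) * ν))) := by rw [Real.exp_add]; ring
        _ = C₁ := by simp
    calc |∑ k ∈ S, g k * iteratedDeriv ℓ (bern ν k) x| * (ν:ℝ)^2
        ≤ (N * ((ν:ℝ)^ℓ * (2^ℓ * (2 * exp (-(η^2/4) * ((ν-ℓ:ℕ):ℝ)))))) * (ν:ℝ)^2 := by
          apply mul_le_mul_of_nonneg_right _ (by positivity)
          exact le_trans habs (mul_le_mul_of_nonneg_left hbound hN0)
      _ = (2^(ℓ+1)) * ((ν:ℝ)^(ℓ+2) * exp (-(η^2/4) * ((ν-ℓ:ℕ):ℝ))) * N := by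
          rw [show (ν:ℝ)^(ℓ+2) = (ν:ℝ)^ℓ * (ν:ℝ)^2 by rw [pow_add]]
          ring
      _ ≤ (2^(ℓ+1)) * C₁ * N := by
          apply mul_le_mul_of_nonneg_right _ hN0
          exact mul_le_mul_of_nonneg_left hexp (by positivity)
      _ ≤ M * N := by
          apply mul_le_mul_of_nonneg_right _ hN0
          rw [hM]
          have h1 : (0:ℝ) ≤ (ν₀:ℝ)^(ℓ+2) * 2^ℓ * ((ν₀:ℝ)+1) := by positivity
          linarith
end

section
/- Let C ⊂ ℝⁿ be a convex set with nonempty interior and let x, y ∈ C. If S denotes the segment joining x and y, then dist(S, ℝⁿ \ Int(C)) = min{dist(x, ℝⁿ \ Int(C)), dist(y, ℝⁿ \ Int(C))}. -/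
theorem segment_dist_to_boundary (n : ℕ) (C : Set (EuclideanSpace ℝ (Fin n)))
    (hC : Convex ℝ C) (hint : (interior C).Nonempty)
    (x y : EuclideanSpace ℝ (Fin n)) (hx : x ∈ C) (hy : y ∈ C) :
    sInf ((fun z => Metric.infDist z (interior C)ᶜ) '' segment ℝ x y) =
      min (Metric.infDist x (interior C)ᶜ) (Metric.infDist y (interior C)ᶜ) := by
  set f : EuclideanSpace ℝ (Fin n) → ℝ := fun z => Metric.infDist z (interior C)ᶜ with hf
  set T := f '' segment ℝ x y with hT
  have hne : T.Nonempty := ⟨f x, x, left_mem_segment ℝ x y, rfl⟩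
  have hbdd : BddBelow T := ⟨0, by rintro v ⟨z, hz, rfl⟩; exact Metric.infDist_nonneg⟩
  refine le_antisymm (le_min (csInf_le hbdd ⟨x, left_mem_segment ℝ x y, rfl⟩)
    (csInf_le hbdd ⟨y, right_mem_segment ℝ x y, rfl⟩)) (le_csInf hne ?_)
  rintro v ⟨z, ⟨a, b, ha, hb, hab, hz⟩, rfl⟩
  set m := min (f x) (f y) with hm
  show m ≤ f z
  rcases le_or_gt m 0 with hm0 | hm0
  · exact hm0.trans Metric.infDist_nonneg
  have hfx : 0 < f x := lt_of_lt_of_le hm0 (min_le_left _ _)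
  have hfy : 0 < f y := lt_of_lt_of_le hm0 (min_le_right _ _)
  set D : ℝ := a * f x + b * f y with hD
  have hmD : m ≤ D := by
    calc m = a * m + b * m := by rw [← add_mul, hab, one_mul]
    _ ≤ D := add_le_add (mul_le_mul_of_nonneg_left (min_le_left _ _) ha)
        (mul_le_mul_of_nonneg_left (min_le_right _ _) hb)
  have hDpos : 0 < D := lt_of_lt_of_le hm0 hmD
  have hcne : ((interior C)ᶜ).Nonempty := by
    by_contra h
    rw [Set.not_nonempty_iff_eq_empty] at h
    have : f x = 0 := by rw [hf]; simp [h]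
    exact absurd this (ne_of_gt hfx)
  by_contra hcon
  push_neg at hcon
  obtain ⟨w, hw, hwd⟩ := (Metric.infDist_lt_iff hcne).mp hcon
  apply hw
  -- show w ∈ interior C
  set vv := w - z with hvv
  have hnv : ‖vv‖ < D := by
    have : dist z w < D := lt_of_lt_of_le hwd hmD
    rwa [dist_eq_norm, ← norm_neg, neg_sub] at this
  set x' := x + (f x / D) • vv with hx'
  set y' := y + (f y / D) • vv with hy'
  have hx'mem : x' ∈ interior C := by
    apply Metric.ball_infDist_compl_subset (x := x)
    rw [Metric.mem_ball, hx', dist_eq_norm, add_sub_cancel_left, norm_smul,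
      Real.norm_of_nonneg (by positivity)]
    calc f x / D * ‖vv‖ < f x / D * D := by
          exact mul_lt_mul_of_pos_left hnv (by positivity)
    _ = f x := div_mul_cancel₀ _ (ne_of_gt hDpos)
  have hy'mem : y' ∈ interior C := by
    apply Metric.ball_infDist_compl_subset (x := y)
    rw [Metric.mem_ball, hy', dist_eq_norm, add_sub_cancel_left, norm_smul,
      Real.norm_of_nonneg (by positivity)]
    calc f y / D * ‖vv‖ < f y / D * D := by
          exact mul_lt_mul_of_pos_left hnv (by positivity)
    _ = f y := div_mul_cancel₀ _ (ne_of_gt hDpos)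
  have hcomb : a • x' + b • y' = w := by
    rw [hx', hy', smul_add, smul_add, smul_smul, smul_smul]
    have : a • x + b • y + (a * (f x / D)) • vv + (b * (f y / D)) • vv = w := by
      rw [hz, add_assoc, ← add_smul]
      have hc : a * (f x / D) + b * (f y / D) = 1 := by
        field_simp [hD]
        exact hD.symm
      rw [hc, one_smul, hvv, add_sub_cancel]
    linear_combination (norm := module) this
  rw [← hcomb]
  exact hC.interior hx'mem hy'mem ha hb hab
end

section
/- Let a < t₁ < t₂ < ⋯ < t_r < b be real numbers and ℓ ≥ 0 an integer. For 1 ≤ i ≤ r and 0 ≤ k ≤ ℓ define P_{ik}(t) := c_{ik} (t − t_i)^k ∏_{j≠i} ((t − t_i)^{ℓ+1} − (t_j − t_i)^{ℓ+1})^{ℓ+1}, with c_{ik} := (1/k!) · (−1)^{(ℓ+1)(r−1)} / ∏_{j≠i} (t_j − t_i)^{(ℓ+1)²}. Then the m-th derivative satisfies P_{ik}^{(m)}(t_j) = 1 if i = j and k = m, and P_{ik}^{(m)}(t_j) = 0 otherwise, for all 1 ≤ j ≤ r and 0 ≤ m ≤ ℓ. -/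
open Polynomial

private lemma iteratedDeriv_polynomial (p : Polynomial ℝ) (m : ℕ) :
    iteratedDeriv m (fun x : ℝ => p.eval x) = fun x => (derivative^[m] p).eval x := by
  induction m with
  | zero => simp
  | succ n ih =>
    rw [iteratedDeriv_succ, ih, Function.iterate_succ_apply']
    funext x
    exact Polynomial.deriv _

private lemma iterate_derivative_add' (p q : Polynomial ℝ) (m : ℕ) :
    derivative^[m] (p + q) = derivative^[m] p + derivative^[m] q := by
  induction m with
  | zero => simp
  | succ n ih => rw [Function.iterate_succ_apply', ih, derivative_add,
      Function.iterate_succ_apply', Function.iterate_succ_apply']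

private lemma eval_iterate_derivative_of_dvd (P : Polynomial ℝ) (s : ℝ) (n m : ℕ)
    (hdvd : (X - C s) ^ n ∣ P) (hmn : m < n) :
    (derivative^[m] P).eval s = 0 := by
  have h := Polynomial.pow_sub_dvd_iterate_derivative_of_pow_dvd m hdvd
  have h1 : (X - C s) ∣ derivative^[m] P := by
    refine dvd_trans ?_ h
    exact dvd_pow_self _ (by omega)
  have := (Polynomial.dvd_iff_isRoot).mp h1
  exact this

theorem hermite_interpolation_basis (r : ℕ) (hr : 1 ≤ r) (a b : ℝ)
    (t : Fin r → ℝ) (hmono : StrictMono t) (hab : ∀ i, t i ∈ Set.Ioo a b)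
    (ℓ : ℕ) (i : Fin r) (k : ℕ) (hk : k ≤ ℓ) (j : Fin r) (m : ℕ) (hm : m ≤ ℓ) :
    iteratedDeriv m
        (fun x : ℝ =>
          (1 / (k.factorial : ℝ) *
              ((-1 : ℝ) ^ ((ℓ + 1) * (r - 1)) /
                ∏ j' ∈ Finset.univ.erase i, (t j' - t i) ^ ((ℓ + 1) ^ 2))) *
            (x - t i) ^ k *
            ∏ j' ∈ Finset.univ.erase i,
              ((x - t i) ^ (ℓ + 1) - (t j' - t i) ^ (ℓ + 1)) ^ (ℓ + 1))
        (t j) = if i = j ∧ k = m then 1 else 0 := by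
  set u := t i with hu
  set c : ℝ := 1 / (k.factorial : ℝ) *
      ((-1 : ℝ) ^ ((ℓ + 1) * (r - 1)) /
        ∏ j' ∈ Finset.univ.erase i, (t j' - u) ^ ((ℓ + 1) ^ 2)) with hc
  set G : Polynomial ℝ := ∏ j' ∈ Finset.univ.erase i,
      ((X - C u) ^ (ℓ + 1) - C ((t j' - u) ^ (ℓ + 1))) ^ (ℓ + 1) with hG
  set P : Polynomial ℝ := C c * (X - C u) ^ k * G with hP
  have hfun : (fun x : ℝ =>
      c * (x - u) ^ k *
        ∏ j' ∈ Finset.univ.erase i,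
          ((x - u) ^ (ℓ + 1) - (t j' - u) ^ (ℓ + 1)) ^ (ℓ + 1)) =
      fun x : ℝ => P.eval x := by
    funext x
    simp [hP, hG, Polynomial.eval_prod, ← hu]
  rw [hfun, iteratedDeriv_polynomial]
  beta_reduce
  by_cases hij : i = j
  · subst hij
    simp only [and_true, eq_self_iff_true, true_and]
    -- decompose G
    set q : Polynomial ℝ := ∏ j' ∈ Finset.univ.erase i,
        (X - C ((t j' - u) ^ (ℓ + 1))) ^ (ℓ + 1) with hq
    have hGcomp : G = q.comp ((X - C u) ^ (ℓ + 1)) := by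
      rw [hq, Polynomial.prod_comp]
      refine Finset.prod_congr rfl fun j' _ => ?_
      rw [Polynomial.pow_comp, Polynomial.sub_comp, Polynomial.X_comp, Polynomial.C_comp]
    set G0 : ℝ := q.eval 0 with hG0
    have hGeval : G.eval u = G0 := by
      rw [hGcomp, Polynomial.eval_comp]
      simp [hG0]
    have hdvd1 : (X - C u) ^ (ℓ + 1) ∣ (G - C G0) := by
      have h1 : (X : Polynomial ℝ) ∣ (q - C G0) := by
        rw [show (X : Polynomial ℝ) = X - C 0 by simp, Polynomial.dvd_iff_isRoot]
        simp [Polynomial.IsRoot, hG0]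
      obtain ⟨e, he⟩ := h1
      refine ⟨e.comp ((X - C u) ^ (ℓ + 1)), ?_⟩
      have : G - C G0 = (q - C G0).comp ((X - C u) ^ (ℓ + 1)) := by
        rw [Polynomial.sub_comp, Polynomial.C_comp, hGcomp]
      rw [this, he, Polynomial.mul_comp, Polynomial.X_comp]
    -- split P into main part and remainder
    have hPsplit : P = C (c * G0) * (X - C u) ^ k + C c * (X - C u) ^ k * (G - C G0) := by
      have key : ∀ (c0 g0 : ℝ) (W : Polynomial ℝ),
          C c0 * (X - C u) ^ k * W =
            C (c0 * g0) * (X - C u) ^ k + C c0 * (X - C u) ^ k * (W - C g0) := by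
        intro c0 g0 W
        rw [C_mul]
        ring
      exact key c G0 G
    rw [hPsplit, iterate_derivative_add', Polynomial.eval_add]
    have hrem : (derivative^[m] (C c * (X - C u) ^ k * (G - C G0))).eval u = 0 := by
      refine eval_iterate_derivative_of_dvd _ _ (ℓ + 1) m ?_ (by omega)
      exact Dvd.dvd.mul_left hdvd1 _
    rw [hrem, add_zero, Polynomial.iterate_derivative_C_mul,
      Polynomial.iterate_derivative_X_sub_pow, Polynomial.eval_mul, Polynomial.eval_C,
      Polynomial.eval_smul, Polynomial.eval_pow, Polynomial.eval_sub, Polynomial.eval_X,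
      Polynomial.eval_C, sub_self, nsmul_eq_mul]
    -- compute G0
    have hinj : ∀ j' ∈ Finset.univ.erase i, t j' - u ≠ 0 := by
      intro j' hj'
      have hne : j' ≠ i := (Finset.mem_erase.mp hj').1
      have := hmono.injective.ne hne
      rw [hu]
      intro h
      exact this (by linarith [sub_eq_zero.mp h])
    have hD : (∏ j' ∈ Finset.univ.erase i, (t j' - u) ^ ((ℓ + 1) ^ 2)) ≠ 0 := by
      refine Finset.prod_ne_zero_iff.mpr fun j' hj' => pow_ne_zero _ (hinj j' hj')
    have hcard : (Finset.univ.erase i).card = r - 1 := by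
      rw [Finset.card_erase_of_mem (Finset.mem_univ i), Finset.card_univ, Fintype.card_fin]
    have hG0val : G0 = (-1 : ℝ) ^ ((ℓ + 1) * (r - 1)) *
        ∏ j' ∈ Finset.univ.erase i, (t j' - u) ^ ((ℓ + 1) ^ 2) := by
      rw [hG0, hq, Polynomial.eval_prod, ← hcard, pow_mul, ← Finset.prod_const,
        ← Finset.prod_mul_distrib]
      refine Finset.prod_congr rfl fun j' _ => ?_
      simp only [Polynomial.eval_pow, Polynomial.eval_sub, Polynomial.eval_X, Polynomial.eval_C,
        zero_sub]
      rw [neg_pow, ← pow_mul, sq]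
    have hsq : (-1 : ℝ) ^ ((ℓ + 1) * (r - 1)) * (-1 : ℝ) ^ ((ℓ + 1) * (r - 1)) = 1 := by
      rw [← pow_add]
      exact Even.neg_one_pow ⟨(ℓ + 1) * (r - 1), rfl⟩
    have hcg : c * G0 = 1 / (k.factorial : ℝ) := by
      have h1 : c * G0 = 1 / (k.factorial : ℝ) *
          (((-1 : ℝ) ^ ((ℓ + 1) * (r - 1)) * (-1 : ℝ) ^ ((ℓ + 1) * (r - 1))) *
            ((∏ j' ∈ Finset.univ.erase i, (t j' - u) ^ ((ℓ + 1) ^ 2)) /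
              (∏ j' ∈ Finset.univ.erase i, (t j' - u) ^ ((ℓ + 1) ^ 2)))) := by
        rw [hc, hG0val]; ring
      rw [h1, hsq, div_self hD, one_mul, mul_one]
    by_cases hkm : k = m
    · subst hkm
      simp only [and_self, if_true]
      rw [Nat.sub_self, pow_zero, mul_one, Nat.descFactorial_self, hcg]
      field_simp
    · simp only [hkm, and_false, if_false]
      rcases lt_or_gt_of_ne hkm with h | h
      · rw [Nat.descFactorial_eq_zero_iff_lt.mpr h]
        simp
      · rw [zero_pow (by omega)]
        ring
  · -- j ≠ i case
    have hji : j ∈ Finset.univ.erase i := Finset.mem_erase.mpr ⟨fun h => hij h.symm, Finset.mem_univ _⟩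
    have hdvd : (X - C (t j)) ^ (ℓ + 1) ∣ P := by
      have h1 : (X - C (t j)) ∣ ((X - C u) ^ (ℓ + 1) - C ((t j - u) ^ (ℓ + 1))) := by
        rw [Polynomial.dvd_iff_isRoot]
        simp [Polynomial.IsRoot]
      have h2 : (X - C (t j)) ^ (ℓ + 1) ∣
          ((X - C u) ^ (ℓ + 1) - C ((t j - u) ^ (ℓ + 1))) ^ (ℓ + 1) :=
        pow_dvd_pow_of_dvd h1 _
      have h3 : ((X - C u) ^ (ℓ + 1) - C ((t j - u) ^ (ℓ + 1))) ^ (ℓ + 1) ∣ G :=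
        Finset.dvd_prod_of_mem _ hji
      exact dvd_trans (dvd_trans h2 h3) (Dvd.intro_left _ rfl)
    rw [eval_iterate_derivative_of_dvd P (t j) (ℓ + 1) m hdvd (by omega)]
    simp [hij]
end

section
/- Let [a,b] ⊂ ℝ be a compact interval, Ω ⊂ [a,b] open in [a,b], let a < t₁ < ⋯ < t_r < b with each t_i ∈ Ω, and let f : [a,b] → ℝ be continuous on [a,b] and (ℓ+4)-times continuously differentiable on Ω for some ℓ ≥ 0. Fix ε > 0 and a compact set K ⊂ Ω. Then there exists a polynomial g ∈ ℝ[t] such that (i) sup_{t∈[a,b]} |f(t) − g(t)| < ε, (ii) sup_{t∈K} |f^{(k)}(t) − g^{(k)}(t)| < ε for k = 1, …, ℓ, and (iii) g^{(k)}(t_i) = f^{(k)}(t_i) for i = 1, …, r and k = 0, …, ℓ. -/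
open Polynomial Set
open scoped Manifold


noncomputable def jetMap (x : ℝ) (k : ℕ) : Polynomial ℝ →ₗ[ℝ] ℝ :=
  (Polynomial.leval x).comp ((Polynomial.derivative : Polynomial ℝ →ₗ[ℝ] Polynomial ℝ) ^ k)

lemma jetMap_apply (x : ℝ) (k : ℕ) (p : Polynomial ℝ) :
    jetMap x k p = (Polynomial.derivative^[k] p).eval x := by
  simp [jetMap, Module.End.pow_apply]

lemma exists_antideriv (q : Polynomial ℝ) (x₀ c : ℝ) :
    ∃ p : Polynomial ℝ, derivative p = q ∧ p.eval x₀ = c := by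
  have h : ∃ p₀ : Polynomial ℝ, derivative p₀ = q := by
    refine ⟨q.sum fun n a => C (a / (n+1)) * X^(n+1), ?_⟩
    rw [Polynomial.sum, map_sum]
    conv_rhs => rw [← Polynomial.sum_C_mul_X_pow_eq q, Polynomial.sum]
    refine Finset.sum_congr rfl fun n _ => ?_
    rw [Polynomial.derivative_C_mul, Polynomial.derivative_X_pow]
    rw [Nat.add_sub_cancel, ← mul_assoc]
    congr 1
    rw [← Polynomial.C_mul]
    congr 1
    push_cast
    rw [div_mul_cancel₀]
    positivity
  obtain ⟨p₀, hp₀⟩ := h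
  exact ⟨p₀ + C (c - p₀.eval x₀), by simp [hp₀], by simp⟩

lemma pow_dvd_of_jets_zero (p : Polynomial ℝ) (c : ℝ) (ℓ : ℕ)
    (h : ∀ k ≤ ℓ, (Polynomial.derivative^[k] p).eval c = 0) :
    (X - C c) ^ (ℓ+1) ∣ p := by
  have hcoeff : ∀ k ≤ ℓ, (Polynomial.taylor c p).coeff k = 0 := by
    intro k hk
    rw [Polynomial.taylor_coeff]
    have h2 := congrFun (Polynomial.factorial_smul_hasseDeriv (R := ℝ) k) p
    have h3 : (k.factorial : ℝ) * (Polynomial.hasseDeriv k p).eval c = 0 := by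
      have h4 : ((k.factorial • Polynomial.hasseDeriv k (R := ℝ)) p).eval c = 0 := by
        rw [h2]; exact h k hk
      simpa [Polynomial.eval_smul, nsmul_eq_mul, smul_eq_mul] using h4
    have hfac : (k.factorial : ℝ) ≠ 0 := by exact_mod_cast Nat.factorial_ne_zero k
    exact (mul_eq_zero.mp h3).resolve_left hfac
  conv_rhs => rw [← Polynomial.sum_taylor_eq p c]
  rw [Polynomial.sum]
  refine Finset.dvd_sum fun i hi => ?_
  have hgt : ℓ + 1 ≤ i := by
    by_contra hlt
    push_neg at hlt
    exact (Polynomial.mem_support_iff.mp hi) (hcoeff i (Nat.lt_succ_iff.mp hlt))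
  exact Dvd.dvd.mul_left (pow_dvd_pow _ hgt) _

lemma hermite_exists {r ℓ : ℕ} (t : Fin r → ℝ) (ht : Function.Injective t)
    (v : Fin r → ℕ → ℝ) :
    ∃ h : Polynomial ℝ, ∀ i, ∀ k ≤ ℓ, (Polynomial.derivative^[k] h).eval (t i) = v i k := by
  classical
  set N := r * (ℓ + 1) with hN
  let Φ : Polynomial.degreeLT ℝ N →ₗ[ℝ] ((Fin r × Fin (ℓ+1)) → ℝ) :=
    LinearMap.pi (fun ik => (jetMap (t ik.1) ik.2).comp (Submodule.subtype _))
  have hinj : Function.Injective Φ := by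
    rw [← LinearMap.ker_eq_bot, Submodule.eq_bot_iff]
    rintro ⟨p, hp⟩ hker
    have hjets : ∀ i : Fin r, ∀ k ≤ ℓ, (Polynomial.derivative^[k] p).eval (t i) = 0 := by
      intro i k hk
      have := congrFun hker (i, ⟨k, Nat.lt_succ_of_le hk⟩)
      rwa [LinearMap.pi_apply, LinearMap.comp_apply, Submodule.subtype_apply, jetMap_apply] at this
    have hdvd : (∏ i : Fin r, (X - C (t i)) ^ (ℓ+1)) ∣ p := by
      refine Finset.prod_dvd_of_coprime ?_ (fun i _ => pow_dvd_of_jets_zero p (t i) ℓ (hjets i))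
      intro i _ j _ hij
      exact (Polynomial.pairwise_coprime_X_sub_C ht hij).pow
    have hPdeg : (∏ i : Fin r, (X - C (t i)) ^ (ℓ+1)).natDegree = N := by
      rw [Polynomial.natDegree_prod]
      · simp [Polynomial.natDegree_pow, Polynomial.natDegree_X_sub_C, hN]
      · intro i _
        exact pow_ne_zero _ (Polynomial.X_sub_C_ne_zero (t i))
    have hPmonic : (∏ i : Fin r, (X - C (t i)) ^ (ℓ+1)).Monic :=
      Polynomial.monic_prod_of_monic _ _ fun i _ => (Polynomial.monic_X_sub_C (t i)).pow _
    ext1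
    simp only [Submodule.coe_zero]
    by_contra hp0
    have hdeg := Polynomial.degree_le_of_dvd hdvd hp0
    rw [Polynomial.degree_eq_natDegree hPmonic.ne_zero, hPdeg] at hdeg
    exact absurd (lt_of_le_of_lt hdeg (Polynomial.mem_degreeLT.mp hp)) (lt_irrefl _)
  have hsurj : Function.Surjective Φ := by
    have h1 : Module.finrank ℝ (Polynomial.degreeLT ℝ N) = N := by
      rw [(Polynomial.degreeLTEquiv ℝ N).finrank_eq]
      simp
    have h2 : Module.finrank ℝ ((Fin r × Fin (ℓ+1)) → ℝ) = N := by
      simp [hN]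
    have : FiniteDimensional ℝ (Polynomial.degreeLT ℝ N) :=
      LinearEquiv.finiteDimensional (Polynomial.degreeLTEquiv ℝ N).symm
    exact (LinearMap.injective_iff_surjective_of_finrank_eq_finrank (h1.trans h2.symm)).mp hinj
  obtain ⟨p, hp⟩ := hsurj (fun ik => v ik.1 ik.2)
  refine ⟨p, fun i k hk => ?_⟩
  have := congrFun hp (i, ⟨k, Nat.lt_succ_of_le hk⟩)
  rwa [LinearMap.pi_apply, LinearMap.comp_apply, Submodule.subtype_apply, jetMap_apply] at this

lemma jet_sum_eval (x : ℝ) (K : ℕ) {r ℓ : ℕ} (v : Fin r → Fin (ℓ+1) → ℝ)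
    (e : Fin r → Fin (ℓ+1) → Polynomial ℝ) :
    (Polynomial.derivative^[K] (∑ i, ∑ m, v i m • e i m)).eval x
      = ∑ i, ∑ m, v i m * (Polynomial.derivative^[K] (e i m)).eval x := by
  rw [← jetMap_apply, map_sum]
  refine Finset.sum_congr rfl fun i _ => ?_
  rw [map_sum]
  refine Finset.sum_congr rfl fun m _ => ?_
  rw [map_smul, jetMap_apply, smul_eq_mul]

lemma hermite_bound (a b : ℝ) {r ℓ : ℕ} (t : Fin r → ℝ) (ht : Function.Injective t) :
    ∃ C : ℝ, 0 < C ∧ ∀ (δ : ℝ), 0 ≤ δ → ∀ v : Fin r → Fin (ℓ+1) → ℝ,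
      (∀ i m, |v i m| ≤ δ) →
      ∃ h : Polynomial ℝ,
        (∀ (i : Fin r) (m : Fin (ℓ+1)),
          (Polynomial.derivative^[(m : ℕ)] h).eval (t i) = v i m) ∧
        (∀ k ≤ ℓ, ∀ x ∈ Set.Icc a b, |(Polynomial.derivative^[k] h).eval x| ≤ C * δ) := by
  classical
  have hbasis : ∀ (i : Fin r) (m : Fin (ℓ+1)), ∃ e : Polynomial ℝ,
      ∀ j, ∀ k ≤ ℓ, (Polynomial.derivative^[k] e).eval (t j)
        = if j = i ∧ k = (m : ℕ) then 1 else 0 :=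
    fun i m => hermite_exists t ht (fun j k => if j = i ∧ k = (m : ℕ) then 1 else 0)
  choose e he using hbasis
  have hbound : ∀ (i : Fin r) (m k : Fin (ℓ+1)), ∃ M : ℝ, 0 ≤ M ∧ ∀ x ∈ Set.Icc a b,
      |(Polynomial.derivative^[(k : ℕ)] (e i m)).eval x| ≤ M := by
    intro i m k
    obtain ⟨M, hM⟩ := (isCompact_Icc (a := a) (b := b)).exists_bound_of_continuousOn
      (f := fun x => (Polynomial.derivative^[(k : ℕ)] (e i m)).eval x)
      ((Polynomial.derivative^[(k : ℕ)] (e i m)).continuous.continuousOn)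
    refine ⟨max M 0, le_max_right _ _, fun x hx => le_trans ?_ (le_max_left _ _)⟩
    simpa [Real.norm_eq_abs] using hM x hx
  choose M hM0 hM using hbound
  have hsum0 : (0:ℝ) ≤ ∑ i, ∑ m, ∑ k, M i m k :=
    Finset.sum_nonneg fun i _ => Finset.sum_nonneg fun m _ => Finset.sum_nonneg fun k _ => hM0 i m k
  refine ⟨1 + ∑ i, ∑ m, ∑ k, M i m k, by linarith, fun δ hδ v hv => ?_⟩
  refine ⟨∑ i, ∑ m, v i m • e i m, ?_, ?_⟩
  · intro j m'
    rw [jet_sum_eval]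
    have hm' : (m' : ℕ) ≤ ℓ := Nat.lt_succ_iff.mp m'.isLt
    have : ∀ (i : Fin r) (m : Fin (ℓ+1)), v i m * (Polynomial.derivative^[(m' : ℕ)] (e i m)).eval (t j)
        = if i = j then (if m = m' then v i m else 0) else 0 := by
      intro i m
      rw [he i m j (m' : ℕ) hm']
      rcases eq_or_ne i j with h1 | h1
      · subst h1
        rcases eq_or_ne m m' with h2 | h2
        · subst h2; simp
        · have hne : ¬((m' : ℕ) = (m : ℕ)) := fun hc => h2 (Fin.val_injective hc).symm
          simp [h2, hne]
      · have hne : ¬(j = i) := fun hc => h1 hc.symm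
        simp [h1, hne]
    simp_rw [this]
    simp
  · intro k hk x hx
    have hklt : k < ℓ + 1 := Nat.lt_succ_of_le hk
    set km : Fin (ℓ+1) := ⟨k, hklt⟩ with hkm
    rw [jet_sum_eval]
    calc |∑ i, ∑ m, v i m * (Polynomial.derivative^[k] (e i m)).eval x|
        ≤ ∑ i, ∑ m, |v i m * (Polynomial.derivative^[k] (e i m)).eval x| :=
          (Finset.abs_sum_le_sum_abs _ _).trans
            (Finset.sum_le_sum fun i _ => Finset.abs_sum_le_sum_abs _ _)
      _ ≤ ∑ i, ∑ m, δ * M i m km := by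
          refine Finset.sum_le_sum fun i _ => Finset.sum_le_sum fun m _ => ?_
          rw [abs_mul]
          have h2 : |(Polynomial.derivative^[k] (e i m)).eval x| ≤ M i m km := by
            have := hM i m km x hx
            simpa [hkm] using this
          exact mul_le_mul (hv i m) h2 (abs_nonneg _) hδ
      _ = δ * ∑ i, ∑ m, M i m km := by
          rw [Finset.mul_sum]
          exact Finset.sum_congr rfl fun i _ => (Finset.mul_sum _ _ _).symm
      _ ≤ δ * (1 + ∑ i, ∑ m, ∑ k', M i m k') := by
          refine mul_le_mul_of_nonneg_left ?_ hδ
          have h1 : ∑ i, ∑ m, M i m km ≤ ∑ i, ∑ m, ∑ k', M i m k' :=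
            Finset.sum_le_sum fun i _ => Finset.sum_le_sum fun m _ =>
              Finset.single_le_sum (fun k' _ => hM0 i m k') (Finset.mem_univ km)
          linarith
      _ = (1 + ∑ i, ∑ m, ∑ k', M i m k') * δ := mul_comm _ _




lemma approx_all_derivs {a b : ℝ} (hab : a < b) (n : ℕ) :
    ∀ F : ℝ → ℝ, ContDiffOn ℝ n F (Set.Icc a b) → ∀ δ : ℝ, 0 < δ → ∃ p : Polynomial ℝ,
      ∀ k ≤ n, ∀ x ∈ Set.Icc a b,
        |iteratedDerivWithin k F (Set.Icc a b) x - (Polynomial.derivative^[k] p).eval x| < δ := by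
  have hU : UniqueDiffOn ℝ (Set.Icc a b) := uniqueDiffOn_Icc hab
  induction n with
  | zero =>
    intro F hF δ hδ
    obtain ⟨p, hp⟩ := exists_polynomial_near_of_continuousOn a b F
      (by rwa [← contDiffOn_zero (𝕜 := ℝ)]) δ hδ
    refine ⟨p, fun k hk x hx => ?_⟩
    interval_cases k
    rw [iteratedDerivWithin_zero]
    simpa [abs_sub_comm] using hp x hx
  | succ n IH =>
    intro F hF δ hδ
    set F' := derivWithin F (Set.Icc a b) with hF'def
    have hF' : ContDiffOn ℝ n F' (Set.Icc a b) := by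
      apply hF.derivWithin hU
      exact_mod_cast le_refl _
    have hδ' : 0 < δ / (1 + (b - a)) := by
      apply div_pos hδ; linarith
    obtain ⟨p', hp'⟩ := IH F' hF' (δ / (1 + (b - a))) hδ'
    obtain ⟨p, hpd, hpa⟩ := exists_antideriv p' a (F a)
    refine ⟨p, fun k hk x hx => ?_⟩
    match k with
    | 0 =>
      rw [iteratedDerivWithin_zero, Function.iterate_zero_apply]
      have hder : ∀ y ∈ Set.Icc a b,
          HasDerivWithinAt (fun z => F z - p.eval z) (F' y - p'.eval y) (Set.Icc a b) y := by
        intro y hy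
        apply HasDerivWithinAt.sub
        · exact ((hF.differentiableOn (by simp)
            y hy)).hasDerivWithinAt
        · rw [← hpd]
          exact (p.hasDerivAt y).hasDerivWithinAt
      have hbnd : ∀ y ∈ Set.Icc a b, ‖F' y - p'.eval y‖ ≤ δ / (1 + (b - a)) := by
        intro y hy
        have := hp' 0 (Nat.zero_le n) y hy
        rw [iteratedDerivWithin_zero, Function.iterate_zero_apply] at this
        rw [Real.norm_eq_abs]
        exact this.le
      have key := (convex_Icc a b).norm_image_sub_le_of_norm_hasDerivWithin_le
        hder hbnd (Set.left_mem_Icc.mpr hab.le) hx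
      have h0 : F a - p.eval a = 0 := by rw [hpa]; ring
      rw [h0, sub_zero, Real.norm_eq_abs] at key
      have hxa : ‖x - a‖ ≤ b - a := by
        rw [Real.norm_eq_abs, abs_of_nonneg (by linarith [hx.1])]
        linarith [hx.2]
      calc |F x - p.eval x| ≤ δ / (1 + (b - a)) * ‖x - a‖ := key
        _ ≤ δ / (1 + (b - a)) * (b - a) := by
            exact mul_le_mul_of_nonneg_left hxa hδ'.le
        _ < δ / (1 + (b - a)) * (1 + (b - a)) := by
            apply mul_lt_mul_of_pos_left (by linarith) hδ'
        _ = δ := by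
            rw [div_mul_eq_mul_div, mul_div_assoc, div_self (by linarith), mul_one]
    | m + 1 =>
      have h1 : iteratedDerivWithin (m+1) F (Set.Icc a b) x
          = iteratedDerivWithin m F' (Set.Icc a b) x := by
        rw [iteratedDerivWithin_succ']
      have h2 : Polynomial.derivative^[m+1] p = Polynomial.derivative^[m] p' := by
        rw [Function.iterate_succ_apply, hpd]
      rw [h1, h2]
      have := hp' m (Nat.succ_le_succ_iff.mp hk) x hx
      calc |iteratedDerivWithin m F' (Set.Icc a b) x - (Polynomial.derivative^[m] p').eval x|
          < δ / (1 + (b - a)) := this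
        _ ≤ δ := div_le_self hδ.le (by linarith)





lemma iterDW_inter {n : ℕ} {f : ℝ → ℝ} {s u : Set ℝ} {x : ℝ} (hu : u ∈ nhds x) :
    iteratedDerivWithin n f (s ∩ u) x = iteratedDerivWithin n f s x := by
  simp only [iteratedDerivWithin_eq_iteratedFDerivWithin, iteratedFDerivWithin_inter hu]

lemma iterDW_zero {n : ℕ} {s : Set ℝ} {x : ℝ} (hs : UniqueDiffOn ℝ s) (hx : x ∈ s) :
    iteratedDerivWithin n (fun _ => (0:ℝ)) s x = 0 := by
  rw [iteratedDerivWithin_eq_iteratedFDerivWithin, iteratedFDerivWithin_zero_fun]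
  simp

lemma iter_deriv_add (k : ℕ) (p q : Polynomial ℝ) :
    Polynomial.derivative^[k] (p + q)
      = Polynomial.derivative^[k] p + Polynomial.derivative^[k] q := by
  simp only [← Module.End.pow_apply, map_add]

lemma contDiff_polyeval (p : Polynomial ℝ) (n : ℕ∞) : ContDiff ℝ n fun x => p.eval x := by
  induction p using Polynomial.induction_on' with
  | add p q hp hq => simpa [Polynomial.eval_add] using hp.add hq
  | monomial k c => simpa [Polynomial.eval_monomial] using contDiff_const.mul (contDiff_id.pow k)

theorem approximation_with_interpolation (a b : ℝ) (hab : a < b)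
    (Ω : Set ℝ) (hΩ : ∃ U : Set ℝ, IsOpen U ∧ Ω = U ∩ Set.Icc a b)
    (r : ℕ) (hr : 1 ≤ r) (t : Fin r → ℝ) (hmono : StrictMono t)
    (htab : ∀ i, t i ∈ Set.Ioo a b) (htΩ : ∀ i, t i ∈ Ω)
    (ℓ : ℕ) (f : ℝ → ℝ) (hfc : ContinuousOn f (Set.Icc a b))
    (hfd : ContDiffOn ℝ (ℓ + 4) f Ω)
    (ε : ℝ) (hε : 0 < ε) (K : Set ℝ) (hK : IsCompact K) (hKΩ : K ⊆ Ω) :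
    ∃ g : Polynomial ℝ,
      (∀ x ∈ Set.Icc a b, |f x - g.eval x| < ε) ∧
      (∀ k : ℕ, 1 ≤ k → k ≤ ℓ → ∀ x ∈ K,
        |iteratedDerivWithin k f Ω x - (Polynomial.derivative^[k] g).eval x| < ε) ∧
      (∀ i : Fin r, ∀ k : ℕ, k ≤ ℓ →
        (Polynomial.derivative^[k] g).eval (t i) = iteratedDerivWithin k f Ω (t i)) := by
  classical
  obtain ⟨U, hUopen, hΩeq⟩ := hΩ
  have hUD : UniqueDiffOn ℝ (Set.Icc a b) := uniqueDiffOn_Icc hab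
  have htinj : Function.Injective t := hmono.injective
  set K' : Set ℝ := K ∪ Set.range t with hK'def
  have hK'cpt : IsCompact K' := hK.union (Set.finite_range t).isCompact
  have hK'Ω : K' ⊆ Ω := union_subset hKΩ (range_subset_iff.mpr htΩ)
  have hΩIcc : Ω ⊆ Set.Icc a b := by rw [hΩeq]; exact inter_subset_right
  have hΩU : Ω ⊆ U := by rw [hΩeq]; exact inter_subset_left
  have hK'U : K' ⊆ U := fun x hx => hΩU (hK'Ω hx)
  obtain ⟨V₂, hV₂o, hKV₂, hV₂U⟩ := normal_exists_closure_subset hK'cpt.isClosed hUopen hK'U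
  obtain ⟨V₁, hV₁o, hKV₁, hV₁V₂⟩ := normal_exists_closure_subset hK'cpt.isClosed hV₂o hKV₂
  obtain ⟨V₀, hV₀o, hKV₀, hV₀V₁⟩ := normal_exists_closure_subset hK'cpt.isClosed hV₁o hKV₁
  obtain ⟨χ₁m, hχ₁0, hχ₁1, hχ₁01⟩ := exists_contMDiffMap_zero_one_of_isClosed 𝓘(ℝ, ℝ) (n := ⊤)
    (isClosed_compl_iff.mpr hV₂o) isClosed_closure
    (disjoint_compl_left_iff_subset.mpr hV₁V₂)
  obtain ⟨χ₂m, hχ₂0, hχ₂1, hχ₂01⟩ := exists_contMDiffMap_zero_one_of_isClosed 𝓘(ℝ, ℝ) (n := ⊤)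
    (isClosed_compl_iff.mpr hV₁o) isClosed_closure
    (disjoint_compl_left_iff_subset.mpr hV₀V₁)
  set χ₁ : ℝ → ℝ := ⇑χ₁m with hχ₁def
  set χ₂ : ℝ → ℝ := ⇑χ₂m with hχ₂def
  have hχ₁sm : ContDiff ℝ (ℓ:ℕ) χ₁ := (χ₁m.contMDiff.contDiff).of_le (by exact_mod_cast le_top)
  have hχ₂sm : ContDiff ℝ (ℓ:ℕ) χ₂ := (χ₂m.contMDiff.contDiff).of_le (by exact_mod_cast le_top)
  set f₁ : ℝ → ℝ := fun x => χ₁ x * f x with hf₁def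
  set f₂ : ℝ → ℝ := fun x => f x - f₁ x with hf₂def
  have hff₁ : ∀ x ∈ closure V₁, f x = f₁ x := by
    intro x hx
    have : χ₁ x = 1 := hχ₁1 hx
    simp [hf₁def, this]
  have hf₂V₁ : ∀ x ∈ closure V₁, f₂ x = 0 := by
    intro x hx
    simp [hf₂def, hff₁ x hx]
  -- smoothness of f₁ on Icc
  have hf₁sm : ContDiffOn ℝ ℓ f₁ (Set.Icc a b) := by
    intro x hx
    by_cases hxU : x ∈ U
    · have hΩx : x ∈ Ω := by rw [hΩeq]; exact ⟨hxU, hx⟩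
      have h1 : ContDiffWithinAt ℝ ℓ f₁ Ω x := by
        apply ContDiffWithinAt.mul
        · exact hχ₁sm.contDiffWithinAt
        · exact (hfd x hΩx).of_le le_self_add
      apply h1.mono_of_mem_nhdsWithin
      rw [hΩeq, inter_comm]
      exact inter_mem_nhdsWithin _ (hUopen.mem_nhds hxU)
    · have hxV₂ : x ∉ closure V₂ := fun hc => hxU (hV₂U hc)
      have hmem : (closure V₂)ᶜ ∈ nhdsWithin x (Set.Icc a b) :=
        mem_nhdsWithin_of_mem_nhds (isClosed_closure.isOpen_compl.mem_nhds hxV₂)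
      have hzero : ∀ y ∈ (closure V₂)ᶜ, f₁ y = 0 := by
        intro y hy
        have : χ₁ y = 0 := hχ₁0 (fun hc => hy (subset_closure hc))
        simp [hf₁def, this]
      apply (contDiffWithinAt_const (c := (0:ℝ))).congr_of_eventuallyEq
      · filter_upwards [hmem] with y hy using hzero y hy
      · exact hzero x hxV₂
  -- Hermite constant
  obtain ⟨C, hC, hherm⟩ := hermite_bound a b (ℓ := ℓ) t htinj
  set δ : ℝ := ε / (4 + 2 * C) with hδdef
  have hδ : 0 < δ := by apply div_pos hε; linarith
  -- Weierstrass for f₂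
  have hf₂cont : ContinuousOn f₂ (Set.Icc a b) :=
    hfc.sub ((hχ₁sm.continuous.continuousOn).mul hfc)
  obtain ⟨q₀, hq₀⟩ := exists_polynomial_near_of_continuousOn a b f₂ hf₂cont δ hδ
  set f₄ : ℝ → ℝ := fun x => (1 - χ₂ x) * q₀.eval x with hf₄def
  have hf₄sm : ContDiffOn ℝ ℓ f₄ (Set.Icc a b) :=
    (((contDiff_const.sub hχ₂sm).mul (contDiff_polyeval q₀ ℓ))).contDiffOn
  have hf₂f₄ : ∀ x ∈ Set.Icc a b, |f₂ x - f₄ x| < δ := by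
    intro x hx
    have hsplit : f₂ x - f₄ x = (1 - χ₂ x) * (f₂ x - q₀.eval x) + χ₂ x * f₂ x := by
      rw [hf₄def]; ring
    have hzero : χ₂ x * f₂ x = 0 := by
      by_cases hx1 : χ₂ x = 0
      · rw [hx1, zero_mul]
      · have hxV₁ : x ∈ V₁ := by
          by_contra hc
          exact hx1 (hχ₂0 hc)
        rw [hf₂V₁ x (subset_closure hxV₁), mul_zero]
    rw [hsplit, hzero, add_zero, abs_mul]
    have h01 := hχ₂01 x
    have habs1 : |1 - χ₂ x| ≤ 1 := by
      rw [abs_le]; constructor <;> [linarith [h01.2]; linarith [h01.1]]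
    calc |1 - χ₂ x| * |f₂ x - q₀.eval x| ≤ 1 * |f₂ x - q₀.eval x| :=
          mul_le_mul_of_nonneg_right habs1 (abs_nonneg _)
      _ = |f₂ x - q₀.eval x| := one_mul _
      _ < δ := by rw [abs_sub_comm]; exact hq₀ x hx
  have hf₄V₀ : ∀ x ∈ V₀, f₄ x = 0 := by
    intro x hx
    have : χ₂ x = 1 := hχ₂1 (subset_closure hx)
    simp [hf₄def, this]
  -- polynomial approximations
  obtain ⟨p₁, hp₁⟩ := approx_all_derivs hab ℓ f₁ hf₁sm δ hδ
  obtain ⟨p₄, hp₄⟩ := approx_all_derivs hab ℓ f₄ hf₄sm δ hδ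
  -- key identities on K'
  have hK'V₀ : K' ⊆ V₀ := hKV₀
  have hfeq : ∀ x ∈ K', ∀ k : ℕ,
      iteratedDerivWithin k f Ω x = iteratedDerivWithin k f₁ (Set.Icc a b) x := by
    intro x hxK' k
    have hxΩ : x ∈ Ω := hK'Ω hxK'
    have hxIcc : x ∈ Set.Icc a b := hΩIcc hxΩ
    have hxV₀ : x ∈ V₀ := hK'V₀ hxK'
    have hUx : U ∈ nhds x := hUopen.mem_nhds (hΩU hxΩ)
    have hV₀x : V₀ ∈ nhds x := hV₀o.mem_nhds hxV₀
    have hUDi : UniqueDiffOn ℝ (Set.Icc a b ∩ V₀) := hUD.inter hV₀o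
    calc iteratedDerivWithin k f Ω x
        = iteratedDerivWithin k f (Set.Icc a b) x := by
          rw [hΩeq, inter_comm]; exact iterDW_inter hUx
      _ = iteratedDerivWithin k f (Set.Icc a b ∩ V₀) x := (iterDW_inter hV₀x).symm
      _ = iteratedDerivWithin k f₁ (Set.Icc a b ∩ V₀) x := by
          apply iteratedDerivWithin_congr (s := Set.Icc a b ∩ V₀) ?_ ⟨hxIcc, hxV₀⟩
          intro y hy
          exact hff₁ y (subset_closure (hV₀V₁ (subset_closure hy.2)))
      _ = iteratedDerivWithin k f₁ (Set.Icc a b) x := iterDW_inter hV₀x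
  have hf₄zero : ∀ x ∈ K', ∀ k : ℕ,
      iteratedDerivWithin k f₄ (Set.Icc a b) x = 0 := by
    intro x hxK' k
    have hxIcc : x ∈ Set.Icc a b := hΩIcc (hK'Ω hxK')
    have hxV₀ : x ∈ V₀ := hK'V₀ hxK'
    have hV₀x : V₀ ∈ nhds x := hV₀o.mem_nhds hxV₀
    have hUDi : UniqueDiffOn ℝ (Set.Icc a b ∩ V₀) := hUD.inter hV₀o
    calc iteratedDerivWithin k f₄ (Set.Icc a b) x
        = iteratedDerivWithin k f₄ (Set.Icc a b ∩ V₀) x := (iterDW_inter hV₀x).symm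
      _ = iteratedDerivWithin k (fun _ => (0:ℝ)) (Set.Icc a b ∩ V₀) x := by
          apply iteratedDerivWithin_congr (s := Set.Icc a b ∩ V₀) ?_ ⟨hxIcc, hxV₀⟩
          intro y hy
          exact hf₄V₀ y hy.2
      _ = 0 := iterDW_zero hUDi ⟨hxIcc, hxV₀⟩
  have htK' : ∀ i, t i ∈ K' := fun i => Or.inr ⟨i, rfl⟩
  have htIcc : ∀ i, t i ∈ Set.Icc a b := fun i => hΩIcc (hK'Ω (htK' i))
  -- Hermite correction
  set P : Polynomial ℝ := p₁ + p₄ with hPdef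
  set v : Fin r → Fin (ℓ+1) → ℝ := fun i m =>
    iteratedDerivWithin (m : ℕ) f Ω (t i) - (Polynomial.derivative^[(m : ℕ)] P).eval (t i)
    with hvdef
  have hv : ∀ i m, |v i m| ≤ 2 * δ := by
    intro i m
    have hm : (m : ℕ) ≤ ℓ := Nat.lt_succ_iff.mp m.isLt
    have h1 := hp₁ (m : ℕ) hm (t i) (htIcc i)
    have h4 := hp₄ (m : ℕ) hm (t i) (htIcc i)
    rw [hf₄zero (t i) (htK' i) (m : ℕ), zero_sub, abs_neg] at h4
    have hveq : v i m = (iteratedDerivWithin (m : ℕ) f₁ (Set.Icc a b) (t i)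
        - (Polynomial.derivative^[(m : ℕ)] p₁).eval (t i))
        - (Polynomial.derivative^[(m : ℕ)] p₄).eval (t i) := by
      rw [hvdef]
      simp only
      rw [hfeq (t i) (htK' i) (m : ℕ), hPdef, iter_deriv_add, Polynomial.eval_add]
      ring
    rw [hveq]
    calc |_ - _| ≤ |iteratedDerivWithin (m : ℕ) f₁ (Set.Icc a b) (t i)
        - (Polynomial.derivative^[(m : ℕ)] p₁).eval (t i)|
        + |(Polynomial.derivative^[(m : ℕ)] p₄).eval (t i)| := abs_sub _ _
      _ ≤ 2 * δ := by linarith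
  obtain ⟨h, hjets, hhbound⟩ := hherm (2 * δ) (by linarith) v hv
  refine ⟨P + h, ?_, ?_, ?_⟩
  · -- uniform approximation
    intro x hx
    have h1 := hp₁ 0 (Nat.zero_le ℓ) x hx
    have h4 := hp₄ 0 (Nat.zero_le ℓ) x hx
    rw [iteratedDerivWithin_zero, Function.iterate_zero_apply] at h1 h4
    have hh := hhbound 0 (Nat.zero_le ℓ) x hx
    rw [Function.iterate_zero_apply] at hh
    have h24 := hf₂f₄ x hx
    have hsplit : f x - (P + h).eval x
        = (f₁ x - p₁.eval x) + (f₂ x - f₄ x) + (f₄ x - p₄.eval x) - h.eval x := by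
      rw [Polynomial.eval_add, hPdef, Polynomial.eval_add, hf₂def]
      ring
    rw [hsplit]
    have : (4 + 2 * C) * δ = ε := by
      rw [hδdef]; field_simp
    calc |(f₁ x - p₁.eval x) + (f₂ x - f₄ x) + (f₄ x - p₄.eval x) - h.eval x|
        ≤ |f₁ x - p₁.eval x| + |f₂ x - f₄ x| + |f₄ x - p₄.eval x| + |h.eval x| := by
          apply (abs_sub _ _).trans
          apply add_le_add_left
          apply (abs_add_le _ _).trans
          apply add_le_add_left
          exact abs_add_le _ _
      _ < δ + δ + δ + C * (2 * δ) := by linarith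
      _ ≤ (4 + 2 * C) * δ := by nlinarith
      _ = ε := this
  · -- derivatives on K
    intro k hk1 hkℓ x hxK
    have hxK' : x ∈ K' := Or.inl hxK
    have hxIcc : x ∈ Set.Icc a b := hΩIcc (hK'Ω hxK')
    have h1 := hp₁ k hkℓ x hxIcc
    have h4 := hp₄ k hkℓ x hxIcc
    rw [hf₄zero x hxK' k, zero_sub, abs_neg] at h4
    have hh := hhbound k hkℓ x hxIcc
    have hsplit : iteratedDerivWithin k f Ω x - (Polynomial.derivative^[k] (P + h)).eval x
        = (iteratedDerivWithin k f₁ (Set.Icc a b) x - (Polynomial.derivative^[k] p₁).eval x)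
          - (Polynomial.derivative^[k] p₄).eval x - (Polynomial.derivative^[k] h).eval x := by
      rw [hfeq x hxK' k, iter_deriv_add, Polynomial.eval_add, hPdef, iter_deriv_add,
        Polynomial.eval_add]
      ring
    rw [hsplit]
    have hCδ : (4 + 2 * C) * δ = ε := by rw [hδdef]; field_simp
    calc |_ - _ - _|
        ≤ |iteratedDerivWithin k f₁ (Set.Icc a b) x - (Polynomial.derivative^[k] p₁).eval x|
          + |(Polynomial.derivative^[k] p₄).eval x| + |(Polynomial.derivative^[k] h).eval x| := by
          apply (abs_sub _ _).trans
          apply add_le_add_left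
          exact abs_sub _ _
      _ < δ + δ + C * (2 * δ) := by linarith
      _ < (4 + 2 * C) * δ := by nlinarith
      _ = ε := hCδ
  · -- interpolation
    intro i k hk
    have hkm : k < ℓ + 1 := Nat.lt_succ_of_le hk
    have hj := hjets i ⟨k, hkm⟩
    simp only [hvdef] at hj
    rw [iter_deriv_add, Polynomial.eval_add]
    rw [hj]
    ring
end
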